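/- Let π₁ : A₁ → B and π₂ : A₂ → B be morphisms of unital bialgebras with divisions, each with a section 0₁, 0₂. Let A₁⊗_B A₂ denote the sum of all subcoalgebras C of the tensor-product coalgebra A₁⊗A₂ on which the two linear maps u⊗v ↦ ε(v)π₁(u) and u⊗v ↦ ε(u)π₂(v) into B agree, and let π : A₁⊗_B A₂ → B denote their common restriction. Then: (1) the map b ↦ Σ 0₁(b₍₁₎)⊗0₂(b₍₂₎) is a coalgebra morphism B → A₁⊗_B A₂ which is a section of π; (2) F(A₁⊗_B A₂) = F(A₁)⊗F(A₂) as subspaces of A₁⊗A₂; (3) the linear map F(A₁)⊗F(A₂)⊗B → A₁⊗_B A₂ sending x⊗y⊗b to Σ x·0₁(b₍₁₎) ⊗ y·0₂(b₍₂₎) is a bijective coalgebra morphism. -/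

import Mathlib

open TensorProduct

namespace FormalLoops

variable (k : Type*) [Field k]

/-- A unital, not necessarily associative, bialgebra with left and right divisions:
a cocommutative coassociative counital coalgebra together with a bilinear unital
multiplication and bilinear left/right divisions which are coalgebra morphisms and
satisfy the division cancellation laws (in Sweedler form). -/
structure DivBialg (A : Type*) [AddCommGroup A] [Module k A] where
  Δ : A →ₗ[k] A ⊗[k] A
  ε : A →ₗ[k] k
  mul : A →ₗ[k] A →ₗ[k] A
  one : A
  ld : A →ₗ[k] A →ₗ[k] A
  rd : A →ₗ[k] A →ₗ[k] A
  coassoc : ∀ u : A, (TensorProduct.assoc k A A A) ((Δ.rTensor A) (Δ u)) = (Δ.lTensor A) (Δ u)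
  counit_left : ∀ u : A, (TensorProduct.lid k A) ((ε.rTensor A) (Δ u)) = u
  counit_right : ∀ u : A, (TensorProduct.rid k A) ((ε.lTensor A) (Δ u)) = u
  cocomm : ∀ u : A, (TensorProduct.comm k A A) (Δ u) = Δ u
  Δ_one : Δ one = one ⊗ₜ[k] one
  ε_one : ε one = 1
  one_mul : ∀ u, mul one u = u
  mul_one : ∀ u, mul u one = u
  Δ_mul : ∀ u v, Δ (mul u v) = TensorProduct.map₂ mul mul (Δ u) (Δ v)
  ε_mul : ∀ u v, ε (mul u v) = ε u * ε v
  Δ_ld : ∀ u v, Δ (ld u v) = TensorProduct.map₂ ld ld (Δ u) (Δ v)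
  ε_ld : ∀ u v, ε (ld u v) = ε u * ε v
  Δ_rd : ∀ u v, Δ (rd u v) = TensorProduct.map₂ rd rd (Δ u) (Δ v)
  ε_rd : ∀ u v, ε (rd u v) = ε u * ε v
  /-- Σ u₍₁₎\(u₍₂₎v) = ε(u)v -/
  ld_mul_cancel : ∀ u v, TensorProduct.lift ld ((LinearMap.lTensor A (mul.flip v)) (Δ u)) = ε u • v
  /-- Σ u₍₁₎(u₍₂₎\v) = ε(u)v -/
  mul_ld_cancel : ∀ u v, TensorProduct.lift mul ((LinearMap.lTensor A (ld.flip v)) (Δ u)) = ε u • v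
  /-- Σ (vu₍₁₎)/u₍₂₎ = ε(u)v -/
  rd_mul_cancel : ∀ u v, TensorProduct.lift rd ((LinearMap.rTensor A (mul v)) (Δ u)) = ε u • v
  /-- Σ (v/u₍₁₎)u₍₂₎ = ε(u)v -/
  mul_rd_cancel : ∀ u v, TensorProduct.lift mul ((LinearMap.rTensor A (rd v)) (Δ u)) = ε u • v

variable {A B : Type*} [AddCommGroup A] [Module k A] [AddCommGroup B] [Module k B]

/-- A morphism of unital bialgebras with divisions. -/
structure DivBialgHom (SA : DivBialg k A) (SB : DivBialg k B) (π : A →ₗ[k] B) : Prop where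
  map_Δ : ∀ u, TensorProduct.map π π (SA.Δ u) = SB.Δ (π u)
  map_ε : ∀ u, SB.ε (π u) = SA.ε u
  map_mul : ∀ u v, π (SA.mul u v) = SB.mul (π u) (π v)
  map_one : π SA.one = SB.one
  map_ld : ∀ u v, π (SA.ld u v) = SB.ld (π u) (π v)
  map_rd : ∀ u v, π (SA.rd u v) = SB.rd (π u) (π v)

/-- `D` is a subcoalgebra w.r.t. the comultiplication `Δ`: `Δ(D) ⊆ D ⊗ D`. -/
def IsSubcoalg {M : Type*} [AddCommGroup M] [Module k M] (Δ : M →ₗ[k] M ⊗[k] M)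
    (D : Submodule k M) : Prop :=
  ∀ x ∈ D, Δ x ∈ LinearMap.range (TensorProduct.map D.subtype D.subtype)

/-- `F(A)`: the sum of all subcoalgebras `D ⊆ A` on which `π = ε(·) • 1`. -/
def Fsub (SA : DivBialg k A) (oneB : B) (π : A →ₗ[k] B) : Submodule k A :=
  sSup {D : Submodule k A | IsSubcoalg k SA.Δ D ∧ ∀ x ∈ D, π x = SA.ε x • oneB}

end FormalLoops

namespace FormalLoops

variable (k : Type*) [Field k]
variable {A₁ A₂ B : Type*} [AddCommGroup A₁] [Module k A₁] [AddCommGroup A₂] [Module k A₂]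
  [AddCommGroup B] [Module k B]

/-- The comultiplication of the tensor-product coalgebra `A₁ ⊗ A₂`. -/
noncomputable def tcomul (S1 : DivBialg k A₁) (S2 : DivBialg k A₂) :
    A₁ ⊗[k] A₂ →ₗ[k] (A₁ ⊗[k] A₂) ⊗[k] (A₁ ⊗[k] A₂) :=
  (TensorProduct.tensorTensorTensorComm k A₁ A₁ A₂ A₂).toLinearMap ∘ₗ
    TensorProduct.map S1.Δ S2.Δ

/-- The counit of the tensor-product coalgebra `A₁ ⊗ A₂`. -/
noncomputable def tcounit (S1 : DivBialg k A₁) (S2 : DivBialg k A₂) :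
    A₁ ⊗[k] A₂ →ₗ[k] k :=
  (TensorProduct.lid k k).toLinearMap ∘ₗ TensorProduct.map S1.ε S2.ε

/-- The linear map `A₁ ⊗ A₂ → B`, `u ⊗ v ↦ ε(v) π₁(u)`. -/
noncomputable def pbFst (S2 : DivBialg k A₂) (π₁ : A₁ →ₗ[k] B) : A₁ ⊗[k] A₂ →ₗ[k] B :=
  (TensorProduct.rid k B).toLinearMap ∘ₗ TensorProduct.map π₁ S2.ε

/-- The linear map `A₁ ⊗ A₂ → B`, `u ⊗ v ↦ ε(u) π₂(v)`. -/
noncomputable def pbSnd (S1 : DivBialg k A₁) (π₂ : A₂ →ₗ[k] B) : A₁ ⊗[k] A₂ →ₗ[k] B :=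
  (TensorProduct.lid k B).toLinearMap ∘ₗ TensorProduct.map S1.ε π₂

/-- The pullback `A₁ ⊗_B A₂`: the sum of all subcoalgebras of the tensor-product
coalgebra `A₁ ⊗ A₂` on which `u ⊗ v ↦ ε(v)π₁(u)` and `u ⊗ v ↦ ε(u)π₂(v)` agree. -/
noncomputable def pullbackSub (S1 : DivBialg k A₁) (S2 : DivBialg k A₂)
    (π₁ : A₁ →ₗ[k] B) (π₂ : A₂ →ₗ[k] B) : Submodule k (A₁ ⊗[k] A₂) :=
  sSup {C : Submodule k (A₁ ⊗[k] A₂) | IsSubcoalg k (tcomul k S1 S2) C ∧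
    ∀ t ∈ C, pbFst k S2 π₁ t = pbSnd k S1 π₂ t}

end FormalLoops

set_option maxHeartbeats 1600000
set_option synthInstance.maxHeartbeats 400000

namespace FLAux
open TensorProduct LinearMap FormalLoops

variable {k : Type*} [Field k]

section Ext
variable {M N P Q M' N' P' Q' S : Type*}
  [AddCommGroup M] [Module k M] [AddCommGroup N] [Module k N]
  [AddCommGroup P] [Module k P] [AddCommGroup Q] [Module k Q]
  [AddCommGroup M'] [Module k M'] [AddCommGroup N'] [Module k N']
  [AddCommGroup P'] [Module k P'] [AddCommGroup Q'] [Module k Q']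
  [AddCommGroup S] [Module k S]

lemma ext_right {g h : M ⊗[k] (N ⊗[k] P) →ₗ[k] Q}
    (H : ∀ x y z, g (x ⊗ₜ[k] (y ⊗ₜ[k] z)) = h (x ⊗ₜ[k] (y ⊗ₜ[k] z))) : g = h := by
  apply TensorProduct.ext'
  intro x w
  induction w using TensorProduct.induction_on with
  | zero => simp [tmul_zero]
  | tmul y z => exact H x y z
  | add a b ha hb => rw [tmul_add, map_add, map_add, ha, hb]

lemma ext_four {g h : (M ⊗[k] N) ⊗[k] (P ⊗[k] Q) →ₗ[k] S}
    (H : ∀ m n p q, g ((m ⊗ₜ[k] n) ⊗ₜ[k] (p ⊗ₜ[k] q)) = h ((m ⊗ₜ[k] n) ⊗ₜ[k] (p ⊗ₜ[k] q))) :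
    g = h := by
  apply TensorProduct.ext'
  intro x y
  induction x using TensorProduct.induction_on with
  | zero => simp [zero_tmul]
  | tmul m n =>
    induction y using TensorProduct.induction_on with
    | zero => simp [tmul_zero]
    | tmul p q => exact H m n p q
    | add a b ha hb => rw [tmul_add, map_add, map_add, ha, hb]
  | add a b ha hb => rw [add_tmul, map_add, map_add, ha, hb]

/-- Naturality of `tensorTensorTensorComm`. -/
lemma ttc_natural (f : M →ₗ[k] M') (g : N →ₗ[k] N') (h : P →ₗ[k] P') (l : Q →ₗ[k] Q') :
    (tensorTensorTensorComm k M' N' P' Q').toLinearMap ∘ₗ map (map f g) (map h l)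
      = map (map f h) (map g l) ∘ₗ (tensorTensorTensorComm k M N P Q).toLinearMap := by
  apply ext_four
  intro m n p q
  simp

lemma range_map_subtype_mono {D D' : Submodule k M} {E E' : Submodule k N}
    (h1 : D ≤ D') (h2 : E ≤ E') :
    range (map D.subtype E.subtype) ≤ range (map D'.subtype E'.subtype) := by
  rw [← Submodule.subtype_comp_inclusion D D' h1, ← Submodule.subtype_comp_inclusion E E' h2,
    TensorProduct.map_comp]
  exact range_comp_le_range _ _

lemma sSup_subcoalg {Δm : M →ₗ[k] M ⊗[k] M} {S : Set (Submodule k M)}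
    (h : ∀ D ∈ S, IsSubcoalg k Δm D) : IsSubcoalg k Δm (sSup S) := by
  intro x hx
  have hle : sSup S ≤ Submodule.comap Δm
      (range (map (sSup S).subtype (sSup S).subtype)) := by
    apply sSup_le
    intro D hD y hy
    exact range_map_subtype_mono (le_sSup hD) (le_sSup hD) (h D hD y hy)
  exact hle hx

/-- a linear left inverse of the inclusion of a subspace -/
noncomputable def linv (D : Submodule k M) : M →ₗ[k] D :=
  (D.subtype.exists_leftInverse_of_injective (Submodule.ker_subtype D)).choose

lemma linv_comp (D : Submodule k M) : linv D ∘ₗ D.subtype = LinearMap.id :=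
  (D.subtype.exists_leftInverse_of_injective (Submodule.ker_subtype D)).choose_spec

lemma map_subtype_injective (D : Submodule k M) (E : Submodule k N) :
    Function.Injective (map D.subtype E.subtype) := by
  have hcomp : map (linv D) (linv E) ∘ₗ map D.subtype E.subtype = LinearMap.id := by
    rw [← TensorProduct.map_comp, linv_comp, linv_comp, TensorProduct.map_id]
  intro a b hab
  have := congrArg (map (linv D) (linv E)) hab
  rwa [← comp_apply, ← comp_apply, hcomp, id_apply, id_apply] at this

end Ext

end FLAux
namespace FLAux
open TensorProduct LinearMap FormalLoops

variable {k : Type*} [Field k]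

section Coalg
variable {A : Type*} [AddCommGroup A] [Module k A] (S : DivBialg k A)

lemma comm_comul : (TensorProduct.comm k A A).toLinearMap ∘ₗ S.Δ = S.Δ :=
  LinearMap.ext fun u => S.cocomm u

lemma counit_right_map :
    (TensorProduct.rid k A).toLinearMap ∘ₗ lTensor A S.ε ∘ₗ S.Δ = LinearMap.id :=
  LinearMap.ext fun u => S.counit_right u

lemma counit_left_map :
    (TensorProduct.lid k A).toLinearMap ∘ₗ rTensor A S.ε ∘ₗ S.Δ = LinearMap.id :=
  LinearMap.ext fun u => S.counit_left u

lemma coassoc_map :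
    (TensorProduct.assoc k A A A).toLinearMap ∘ₗ rTensor A S.Δ ∘ₗ S.Δ
      = lTensor A S.Δ ∘ₗ S.Δ :=
  LinearMap.ext fun u => S.coassoc u

lemma rTensor_comul (u : A) :
    rTensor A S.Δ (S.Δ u)
      = (TensorProduct.assoc k A A A).symm (lTensor A S.Δ (S.Δ u)) := by
  rw [← S.coassoc u]
  simp

/-- `Σ ε(u₁) ε(u₂) = ε(u)`. -/
lemma eps_comul (u : A) :
    (TensorProduct.lid k k) (map S.ε S.ε (S.Δ u)) = S.ε u := by
  have h : (TensorProduct.lid k k).toLinearMap ∘ₗ map S.ε S.ε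
      = S.ε ∘ₗ (TensorProduct.lid k A).toLinearMap ∘ₗ rTensor A S.ε := by
    apply TensorProduct.ext'
    intro a b
    simp [smul_eq_mul, mul_comm]
  have h2 := LinearMap.congr_fun h (S.Δ u)
  simp only [comp_apply, LinearEquiv.coe_coe] at h2
  rw [h2, S.counit_left]

/-- the `Δ³` middle-swap lemma: `Σ u₁⊗u₂⊗u₃⊗u₄` is invariant under swapping the
middle two tensor legs. -/
lemma middle_swap (u : A) :
    tensorTensorTensorComm k A A A A (map S.Δ S.Δ (S.Δ u)) = map S.Δ S.Δ (S.Δ u) := by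
  set φ : A ⊗[k] ((A ⊗[k] A) ⊗[k] A) →ₗ[k] (A ⊗[k] A) ⊗[k] (A ⊗[k] A) :=
    (TensorProduct.assoc k A A (A ⊗[k] A)).symm.toLinearMap
      ∘ₗ lTensor A (TensorProduct.assoc k A A A).toLinearMap with hφ
  have L1 : map S.Δ S.Δ (S.Δ u)
      = φ (lTensor A (rTensor A S.Δ) (lTensor A S.Δ (S.Δ u))) := by
    have e1 : map S.Δ S.Δ (S.Δ u)
        = lTensor (A ⊗[k] A) S.Δ (rTensor A S.Δ (S.Δ u)) := by
      conv_rhs => rw [← comp_apply]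
      rw [lTensor_comp_rTensor]
    rw [e1, rTensor_comul S]
    -- naturality: lTensor Δ ∘ assoc.symm = assoc.symm ∘ lTensor (lTensor Δ)
    have nat1 : lTensor (A ⊗[k] A) S.Δ ∘ₗ (TensorProduct.assoc k A A A).symm.toLinearMap
        = (TensorProduct.assoc k A A (A ⊗[k] A)).symm.toLinearMap
            ∘ₗ lTensor A (lTensor A S.Δ) := by
      apply ext_right
      intro x y z
      simp
    have h2 := LinearMap.congr_fun nat1 (lTensor A S.Δ (S.Δ u))
    simp only [comp_apply, LinearEquiv.coe_coe] at h2
    rw [h2]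
    have e3 : lTensor A (lTensor A S.Δ) (lTensor A S.Δ (S.Δ u))
        = lTensor A (lTensor A S.Δ ∘ₗ S.Δ) (S.Δ u) := by
      rw [lTensor_comp]; simp
    rw [e3, ← coassoc_map S]
    have e4 : lTensor A ((TensorProduct.assoc k A A A).toLinearMap ∘ₗ rTensor A S.Δ ∘ₗ S.Δ)
          (S.Δ u)
        = lTensor A (TensorProduct.assoc k A A A).toLinearMap
            (lTensor A (rTensor A S.Δ) (lTensor A S.Δ (S.Δ u))) := by
      rw [lTensor_comp, lTensor_comp]; simp
    rw [e4, hφ]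
    simp
  have nat2 : (tensorTensorTensorComm k A A A A).toLinearMap ∘ₗ φ
      = φ ∘ₗ lTensor A (rTensor A (TensorProduct.comm k A A).toLinearMap) := by
    apply ext_right
    intro x w z
    induction w using TensorProduct.induction_on with
    | zero => simp [zero_tmul, tmul_zero]
    | tmul a b => simp [hφ]
    | add a b ha hb => rw [add_tmul, tmul_add, map_add, map_add, ha, hb]
  have swap : lTensor A (rTensor A (TensorProduct.comm k A A).toLinearMap)
        (lTensor A (rTensor A S.Δ) (lTensor A S.Δ (S.Δ u)))
      = lTensor A (rTensor A S.Δ) (lTensor A S.Δ (S.Δ u)) := by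
    rw [← comp_apply, ← lTensor_comp, ← rTensor_comp, comm_comul]
  have h5 := LinearMap.congr_fun nat2 (lTensor A (rTensor A S.Δ) (lTensor A S.Δ (S.Δ u)))
  simp only [comp_apply, LinearEquiv.coe_coe] at h5
  rw [L1, h5, swap, ← L1]

/-- `map₂ f g x y` in terms of `tensorTensorTensorComm`. -/
lemma map₂_eq_ttc (f g : A →ₗ[k] A →ₗ[k] A) (x y : A ⊗[k] A) :
    map₂ f g x y
      = map (lift f) (lift g) (tensorTensorTensorComm k A A A A (x ⊗ₜ[k] y)) := by
  induction x using TensorProduct.induction_on with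
  | zero => simp [zero_tmul]
  | tmul a b =>
    induction y using TensorProduct.induction_on with
    | zero => simp [tmul_zero]
    | tmul c d => simp [map₂_apply_tmul]
    | add p q hp hq => rw [map_add, tmul_add, map_add, map_add, hp, hq]
  | add p q hp hq =>
    rw [map_add, LinearMap.add_apply, add_tmul, map_add, map_add, hp, hq]

/-- `Σ c₁/c₂ = ε(c)·1`. -/
lemma rd_comul (c : A) : lift S.rd (S.Δ c) = S.ε c • S.one := by
  have h := S.rd_mul_cancel c S.one
  have h1 : S.mul S.one = LinearMap.id := LinearMap.ext S.one_mul
  rw [h1, rTensor_id] at h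
  simpa using h

end Coalg

section SubComul
variable {A : Type*} [AddCommGroup A] [Module k A]

/-- the comultiplication of a subcoalgebra -/
noncomputable def subComul (Δm : A →ₗ[k] A ⊗[k] A) (D : Submodule k A) :
    D →ₗ[k] D ⊗[k] D :=
  map (linv D) (linv D) ∘ₗ Δm ∘ₗ D.subtype

lemma subComul_spec {Δm : A →ₗ[k] A ⊗[k] A} {D : Submodule k A}
    (hD : IsSubcoalg k Δm D) (x : D) :
    map D.subtype D.subtype (subComul Δm D x) = Δm (x : A) := by
  obtain ⟨w, hw⟩ := hD (x : A) x.2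
  have h0 : subComul Δm D x = map (linv D) (linv D) (Δm (x : A)) := rfl
  have : subComul Δm D x = w := by
    rw [h0, ← hw, ← comp_apply, ← TensorProduct.map_comp, linv_comp, TensorProduct.map_id,
      id_apply]
  rw [this, hw]

lemma subtype_rid_lTensor (S : DivBialg k A) (D : Submodule k A) (w : D ⊗[k] D) :
    (((TensorProduct.rid k D) (lTensor D (S.ε ∘ₗ D.subtype) w) : D) : A)
      = (TensorProduct.rid k A) (lTensor A S.ε (map D.subtype D.subtype w)) := by
  induction w using TensorProduct.induction_on with
  | zero => simp
  | tmul x y => simp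
  | add p q hp hq =>
    rw [map_add, map_add, map_add, map_add, Submodule.coe_add, hp, hq, map_add]

/-- counit property of the subcoalgebra comultiplication: `Σ ε(x₂) • x₁ = x`. -/
lemma subComul_counit (S : DivBialg k A) {D : Submodule k A}
    (hD : IsSubcoalg k S.Δ D) (x : D) :
    (TensorProduct.rid k D) (lTensor D (S.ε ∘ₗ D.subtype) (subComul S.Δ D x)) = x := by
  apply Subtype.ext
  rw [subtype_rid_lTensor S D, subComul_spec hD, S.counit_right]


end SubComul

end FLAux
namespace FLAux
open TensorProduct LinearMap FormalLoops

variable {k : Type*} [Field k]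

section Single
variable {A B : Type*} [AddCommGroup A] [Module k A] [AddCommGroup B] [Module k B]
variable (S : DivBialg k A) (T : DivBialg k B) (π : A →ₗ[k] B) (z : B →ₗ[k] A)

/-- `r(u) = Σ u₁ / z(π(u₂))` -/
noncomputable def rmap : A →ₗ[k] A :=
  lift S.rd ∘ₗ lTensor A (z ∘ₗ π) ∘ₗ S.Δ

lemma rmap_apply (u : A) :
    rmap S π z u = lift S.rd (lTensor A (z ∘ₗ π) (S.Δ u)) := rfl

variable {S T π z}

lemma rho_comul (hπ : DivBialgHom k S T π) (hz : DivBialgHom k T S z) (u : A) :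
    map (z ∘ₗ π) (z ∘ₗ π) (S.Δ u) = S.Δ (z (π u)) := by
  rw [TensorProduct.map_comp, comp_apply, hπ.map_Δ, hz.map_Δ]

lemma rho_eps (hπ : DivBialgHom k S T π) (hz : DivBialgHom k T S z) (u : A) :
    S.ε (z (π u)) = S.ε u := by rw [hz.map_ε, hπ.map_ε]

lemma pi_z (hsec : π ∘ₗ z = LinearMap.id) (b : B) : π (z b) = b :=
  LinearMap.congr_fun hsec b

/-- reconstruction: `Σ r(u₁)·z(π(u₂)) = u` -/
lemma rmap_recon (hπ : DivBialgHom k S T π) (hz : DivBialgHom k T S z) (u : A) :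
    lift S.mul (map (rmap S π z) (z ∘ₗ π) (S.Δ u)) = u := by
  set ρ : A →ₗ[k] A := z ∘ₗ π with hρ
  set g : A ⊗[k] (A ⊗[k] A) →ₗ[k] A :=
    lift S.mul ∘ₗ map (lift S.rd ∘ₗ lTensor A ρ) ρ
      ∘ₗ (TensorProduct.assoc k A A A).symm.toLinearMap with hg
  have hg1 : ∀ (a : A) (s : A ⊗[k] A),
      g (a ⊗ₜ[k] s) = lift S.mul (rTensor A (S.rd a) (map ρ ρ s)) := by
    intro a s
    induction s using TensorProduct.induction_on with
    | zero => simp [hg]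
    | tmul b c => simp [hg]
    | add p q hp hq => simp only [tmul_add, map_add, hp, hq]
  have key : g ∘ₗ lTensor A S.Δ
      = (TensorProduct.rid k A).toLinearMap ∘ₗ lTensor A S.ε := by
    apply TensorProduct.ext'
    intro a w
    simp only [comp_apply, lTensor_tmul, LinearEquiv.coe_coe, rid_tmul]
    rw [hg1, hρ, rho_comul hπ hz, S.mul_rd_cancel, rho_eps hπ hz]
  have e1 : map (rmap S π z) ρ = map (lift S.rd ∘ₗ lTensor A ρ) ρ ∘ₗ rTensor A S.Δ := by
    apply TensorProduct.ext'
    intro a b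
    simp [rmap_apply, hρ]
  rw [e1, comp_apply, rTensor_comul S]
  have h2 := LinearMap.congr_fun key (S.Δ u)
  simp only [hg, comp_apply, LinearEquiv.coe_coe] at h2
  rw [h2]
  exact S.counit_right u

lemma rmap_pi (hπ : DivBialgHom k S T π) (hz : DivBialgHom k T S z)
    (hsec : π ∘ₗ z = LinearMap.id) (u : A) :
    π (rmap S π z u) = S.ε u • T.one := by
  have h1 : π ∘ₗ lift S.rd = lift T.rd ∘ₗ map π π := by
    apply TensorProduct.ext'
    intro a b
    simp [hπ.map_rd]
  have h2 : ∀ w : A ⊗[k] A, map π π (lTensor A (z ∘ₗ π) w) = map π π w := by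
    intro w
    induction w using TensorProduct.induction_on with
    | zero => simp
    | tmul a b => simp [pi_z hsec]
    | add p q hp hq => simp only [map_add, hp, hq]
  have h3 := LinearMap.congr_fun h1 (lTensor A (z ∘ₗ π) (S.Δ u))
  simp only [comp_apply] at h3
  rw [rmap_apply, h3, h2, hπ.map_Δ, rd_comul T, hπ.map_ε]

lemma rmap_eps (hπ : DivBialgHom k S T π) (hz : DivBialgHom k T S z) (u : A) :
    S.ε (rmap S π z u) = S.ε u := by
  have h1 : S.ε ∘ₗ lift S.rd = (TensorProduct.lid k k).toLinearMap ∘ₗ map S.ε S.ε := by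
    apply TensorProduct.ext'
    intro a b
    simp [S.ε_rd, smul_eq_mul]
  have h2 : ∀ w : A ⊗[k] A, map S.ε S.ε (lTensor A (z ∘ₗ π) w) = map S.ε S.ε w := by
    intro w
    induction w using TensorProduct.induction_on with
    | zero => simp
    | tmul a b => simp [rho_eps hπ hz]
    | add p q hp hq => simp only [map_add, hp, hq]
  have h3 := LinearMap.congr_fun h1 (lTensor A (z ∘ₗ π) (S.Δ u))
  simp only [comp_apply, LinearEquiv.coe_coe] at h3
  rw [rmap_apply, h3, h2, eps_comul]

lemma rmap_comul (hπ : DivBialgHom k S T π) (hz : DivBialgHom k T S z) (u : A) :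
    S.Δ (rmap S π z u) = map (rmap S π z) (rmap S π z) (S.Δ u) := by
  set ρ : A →ₗ[k] A := z ∘ₗ π with hρ
  have h1 : S.Δ ∘ₗ lift S.rd
      = map (lift S.rd) (lift S.rd) ∘ₗ (tensorTensorTensorComm k A A A A).toLinearMap
          ∘ₗ map S.Δ S.Δ := by
    apply TensorProduct.ext'
    intro a b
    simp only [comp_apply, map_tmul, lift.tmul, LinearEquiv.coe_coe]
    rw [S.Δ_rd, map₂_eq_ttc]
  have h2 : ∀ w : A ⊗[k] A, map S.Δ S.Δ (lTensor A ρ w)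
      = lTensor (A ⊗[k] A) (map ρ ρ) (map S.Δ S.Δ w) := by
    intro w
    induction w using TensorProduct.induction_on with
    | zero => simp
    | tmul a b =>
      simp only [lTensor_tmul, map_tmul, hρ, comp_apply, rho_comul hπ hz]
    | add p q hp hq => simp only [map_add, hp, hq]
  have h3 : (tensorTensorTensorComm k A A A A).toLinearMap ∘ₗ lTensor (A ⊗[k] A) (map ρ ρ)
      = map (lTensor A ρ) (lTensor A ρ)
          ∘ₗ (tensorTensorTensorComm k A A A A).toLinearMap := by
    apply ext_four
    intro a b c d
    simp
  have h4 := LinearMap.congr_fun h1 (lTensor A ρ (S.Δ u))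
  simp only [comp_apply, LinearEquiv.coe_coe] at h4
  rw [rmap_apply, h4, h2]
  have h5 := LinearMap.congr_fun h3 (map S.Δ S.Δ (S.Δ u))
  simp only [comp_apply, LinearEquiv.coe_coe] at h5
  rw [h5, middle_swap]
  have h6 : ∀ w : A ⊗[k] A,
      map (lift S.rd) (lift S.rd) (map (lTensor A ρ) (lTensor A ρ) (map S.Δ S.Δ w))
        = map (rmap S π z) (rmap S π z) w := by
    intro w
    induction w using TensorProduct.induction_on with
    | zero => simp
    | tmul a b => simp [rmap_apply, hρ]
    | add p q hp hq => simp only [map_add, hp, hq]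
  exact h6 (S.Δ u)

end Single

end FLAux
namespace FLAux
open TensorProduct LinearMap FormalLoops

variable {k : Type*} [Field k]

section FsubLemmas
variable {A B : Type*} [AddCommGroup A] [Module k A] [AddCommGroup B] [Module k B]
variable {S : DivBialg k A} {T : DivBialg k B} {π : A →ₗ[k] B} {z : B →ₗ[k] A}

lemma Fsub_subcoalg (S : DivBialg k A) (oneB : B) (π : A →ₗ[k] B) :
    IsSubcoalg k S.Δ (Fsub k S oneB π) :=
  sSup_subcoalg fun _ hD => hD.1

lemma Fsub_pi (S : DivBialg k A) (oneB : B) (π : A →ₗ[k] B) :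
    ∀ x ∈ Fsub k S oneB π, π x = S.ε x • oneB := by
  intro x hx
  have hle : Fsub k S oneB π ≤ ker (π - LinearMap.smulRight S.ε oneB) := by
    apply sSup_le
    rintro D ⟨_, hD2⟩ y hy
    simp [LinearMap.mem_ker, sub_eq_zero, hD2 y hy]
  have := hle hx
  rw [LinearMap.mem_ker, LinearMap.sub_apply, sub_eq_zero] at this
  simpa using this

lemma rmap_mem (hπ : DivBialgHom k S T π) (hz : DivBialgHom k T S z)
    (hsec : π ∘ₗ z = LinearMap.id) (u : A) :
    rmap S π z u ∈ Fsub k S T.one π := by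
  have hset : range (rmap S π z) ∈
      {D : Submodule k A | IsSubcoalg k S.Δ D ∧ ∀ x ∈ D, π x = S.ε x • T.one} := by
    constructor
    · rintro x ⟨v, rfl⟩
      rw [rmap_comul hπ hz]
      have hcomp : map (rmap S π z) (rmap S π z)
          = map (range (rmap S π z)).subtype (range (rmap S π z)).subtype
              ∘ₗ map (rmap S π z).rangeRestrict (rmap S π z).rangeRestrict := by
        have hsr : (range (rmap S π z)).subtype ∘ₗ (rmap S π z).rangeRestrict
            = rmap S π z := LinearMap.ext fun _ => rfl
        rw [← TensorProduct.map_comp, hsr]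
      rw [hcomp]
      exact ⟨map (rmap S π z).rangeRestrict (rmap S π z).rangeRestrict (S.Δ v), rfl⟩
    · rintro x ⟨v, rfl⟩
      rw [rmap_pi hπ hz hsec, ← rmap_eps hπ hz v]
  exact le_sSup hset ⟨u, rfl⟩

/-- the key cancellation: `r(x · z(b)) = ε(b) • x` for `x ∈ F(A)`. -/
lemma rmap_mul_section (hπ : DivBialgHom k S T π) (hz : DivBialgHom k T S z)
    (hsec : π ∘ₗ z = LinearMap.id) (x : Fsub k S T.one π) (b : B) :
    rmap S π z (S.mul (x : A) (z b)) = T.ε b • (x : A) := by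
  set ρ : A →ₗ[k] A := z ∘ₗ π with hρ
  revert x
  set F : Submodule k A := Fsub k S T.one π with hF
  intro x
  set q : F ⊗[k] B →ₗ[k] A := lift S.mul ∘ₗ map F.subtype z with hq
  set w : F ⊗[k] F := subComul S.Δ F x with hw
  set c : B ⊗[k] B := T.Δ b with hc
  set cF : F ⊗[k] F →ₗ[k] F :=
    (TensorProduct.rid k F).toLinearMap ∘ₗ lTensor F (S.ε ∘ₗ F.subtype) with hcF
  set H : F ⊗[k] (B ⊗[k] B) →ₗ[k] A :=
    lift S.rd ∘ₗ map q z ∘ₗ (TensorProduct.assoc k F B B).symm.toLinearMap with hH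
  have hkey : ∀ (x' : F) (b' : B), ρ (S.mul (x' : A) (z b')) = S.ε (x' : A) • z b' := by
    intro x' b'
    have h1 : π (S.mul (x' : A) (z b')) = S.ε (x' : A) • b' := by
      rw [hπ.map_mul, pi_z hsec, Fsub_pi S T.one π (x' : A) x'.2, map_smul,
        LinearMap.smul_apply, T.one_mul]
    rw [hρ, comp_apply, h1, map_smul]
  have stepA : S.Δ (S.mul (x : A) (z b))
      = map q q (tensorTensorTensorComm k F F B B (w ⊗ₜ[k] c)) := by
    rw [S.Δ_mul, map₂_eq_ttc]
    have h1 : S.Δ (x : A) = map F.subtype F.subtype w :=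
      (subComul_spec (Fsub_subcoalg S T.one π) x).symm
    have h2 : S.Δ (z b) = map z z c := by rw [hc, hz.map_Δ]
    rw [h1, h2]
    have h3 := LinearMap.congr_fun (ttc_natural F.subtype F.subtype z z) (w ⊗ₜ[k] c)
    simp only [comp_apply, LinearEquiv.coe_coe, map_tmul] at h3
    rw [h3, hq, ← comp_apply (map _ _) (map _ _), ← TensorProduct.map_comp]
  have hLT : ∀ Y : (F ⊗[k] B) ⊗[k] (F ⊗[k] B),
      lTensor A ρ (map q q Y) = map q (ρ ∘ₗ q) Y := by
    intro Y
    induction Y using TensorProduct.induction_on with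
    | zero => simp
    | tmul s t => simp
    | add p p' hp hp' => simp only [map_add, hp, hp']
  have GD : lift S.rd ∘ₗ map q (ρ ∘ₗ q) ∘ₗ (tensorTensorTensorComm k F F B B).toLinearMap
      = H ∘ₗ map cF (LinearMap.id : B ⊗[k] B →ₗ[k] B ⊗[k] B) := by
    apply ext_four
    intro x₁ x₂ b₁ b₂
    simp only [comp_apply, LinearEquiv.coe_coe, tensorTensorTensorComm_tmul, map_tmul,
      lift.tmul, hH, hcF, hq, lTensor_tmul, rid_tmul, assoc_symm_tmul, id_coe, id_eq,
      Submodule.coe_subtype]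
    rw [hkey x₂ b₂]
    simp only [Submodule.coe_smul, map_smul, LinearMap.smul_apply]
  have hHx : ∀ c' : B ⊗[k] B,
      H ((x : F) ⊗ₜ[k] c') = lift S.rd (rTensor A (S.mul (x : A)) (map z z c')) := by
    intro c'
    induction c' using TensorProduct.induction_on with
    | zero => simp [hH]
    | tmul b₁ b₂ => simp [hH, hq]
    | add p p' hp hp' => simp only [tmul_add, map_add, hp, hp']
  -- assemble
  rw [rmap_apply, stepA, hLT]
  have h5 := LinearMap.congr_fun GD (w ⊗ₜ[k] c)
  simp only [comp_apply, LinearEquiv.coe_coe] at h5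
  rw [h5, map_tmul, id_coe, id_eq]
  have h6 : cF w = x := subComul_counit S (Fsub_subcoalg S T.one π) x
  rw [h6, hHx, hc, hz.map_Δ, S.rd_mul_cancel, hz.map_ε]

end FsubLemmas

end FLAux
namespace FLAux
open TensorProduct LinearMap FormalLoops

variable {k : Type*} [Field k]

section MoreSingle
variable {A B : Type*} [AddCommGroup A] [Module k A] [AddCommGroup B] [Module k B]
variable {S : DivBialg k A} {T : DivBialg k B} {π : A →ₗ[k] B} {z : B →ₗ[k] A}

lemma pi_mul_section (hπ : DivBialgHom k S T π) (hsec : π ∘ₗ z = LinearMap.id)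
    (x : Fsub k S T.one π) (b' : B) :
    π (S.mul (x : A) (z b')) = S.ε (x : A) • b' := by
  rw [hπ.map_mul, pi_z hsec, Fsub_pi S T.one π (x : A) x.2, map_smul,
    LinearMap.smul_apply, T.one_mul]

lemma eps_mul_section (hz : DivBialgHom k T S z) (a : A) (b' : B) :
    S.ε (S.mul a (z b')) = S.ε a * T.ε b' := by
  rw [S.ε_mul, hz.map_ε]

lemma comul_mul_section (hz : DivBialgHom k T S z) (x : Fsub k S T.one π) (b : B) :
    S.Δ (S.mul (x : A) (z b))
      = map (lift S.mul ∘ₗ map (Fsub k S T.one π).subtype z)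
            (lift S.mul ∘ₗ map (Fsub k S T.one π).subtype z)
          (tensorTensorTensorComm k (Fsub k S T.one π) (Fsub k S T.one π) B B
            (subComul S.Δ (Fsub k S T.one π) x ⊗ₜ[k] T.Δ b)) := by
  rw [S.Δ_mul, map₂_eq_ttc]
  have h1 : S.Δ (x : A) = map (Fsub k S T.one π).subtype (Fsub k S T.one π).subtype
      (subComul S.Δ (Fsub k S T.one π) x) :=
    (subComul_spec (Fsub_subcoalg S T.one π) x).symm
  have h2 : S.Δ (z b) = map z z (T.Δ b) := (hz.map_Δ b).symm
  rw [h1, h2]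
  have h3 := LinearMap.congr_fun
    (ttc_natural (Fsub k S T.one π).subtype (Fsub k S T.one π).subtype z z)
    (subComul S.Δ (Fsub k S T.one π) x ⊗ₜ[k] T.Δ b)
  simp only [comp_apply, LinearEquiv.coe_coe, map_tmul] at h3
  rw [h3, ← comp_apply (map _ _) (map _ _), ← TensorProduct.map_comp]

end MoreSingle

section Pullback
variable {A₁ A₂ B : Type*} [AddCommGroup A₁] [Module k A₁] [AddCommGroup A₂] [Module k A₂]
  [AddCommGroup B] [Module k B]
variable {S1 : DivBialg k A₁} {S2 : DivBialg k A₂} {SB : DivBialg k B}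
variable {π₁ : A₁ →ₗ[k] B} {π₂ : A₂ →ₗ[k] B} {z₁ : B →ₗ[k] A₁} {z₂ : B →ₗ[k] A₂}

lemma tcomul_tmul (S1 : DivBialg k A₁) (S2 : DivBialg k A₂) (u : A₁) (v : A₂) :
    tcomul k S1 S2 (u ⊗ₜ[k] v)
      = tensorTensorTensorComm k A₁ A₁ A₂ A₂ (S1.Δ u ⊗ₜ[k] S2.Δ v) := by
  simp [tcomul]

lemma tcounit_tmul (S1 : DivBialg k A₁) (S2 : DivBialg k A₂) (u : A₁) (v : A₂) :
    tcounit k S1 S2 (u ⊗ₜ[k] v) = S1.ε u * S2.ε v := by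
  simp [tcounit, smul_eq_mul]

lemma pbFst_tmul (S2 : DivBialg k A₂) (π₁ : A₁ →ₗ[k] B) (u : A₁) (v : A₂) :
    pbFst k S2 π₁ (u ⊗ₜ[k] v) = S2.ε v • π₁ u := by
  simp [pbFst]

lemma pbSnd_tmul (S1 : DivBialg k A₁) (π₂ : A₂ →ₗ[k] B) (u : A₁) (v : A₂) :
    pbSnd k S1 π₂ (u ⊗ₜ[k] v) = S1.ε u • π₂ v := by
  simp [pbSnd]

/-- part 1: σ is compatible with comultiplications. -/
lemma sigma_comul (hz₁ : DivBialgHom k SB S1 z₁) (hz₂ : DivBialgHom k SB S2 z₂) (b : B) :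
    tcomul k S1 S2 (map z₁ z₂ (SB.Δ b))
      = map (map z₁ z₂ ∘ₗ SB.Δ) (map z₁ z₂ ∘ₗ SB.Δ) (SB.Δ b) := by
  have step1 : ∀ w : B ⊗[k] B, tcomul k S1 S2 (map z₁ z₂ w)
      = map (map z₁ z₂) (map z₁ z₂)
          (tensorTensorTensorComm k B B B B (map SB.Δ SB.Δ w)) := by
    intro w
    induction w using TensorProduct.induction_on with
    | zero => simp
    | tmul b₁ b₂ =>
      rw [map_tmul, tcomul_tmul, ← hz₁.map_Δ, ← hz₂.map_Δ, map_tmul]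
      have h3 := LinearMap.congr_fun (ttc_natural z₁ z₁ z₂ z₂) (SB.Δ b₁ ⊗ₜ[k] SB.Δ b₂)
      simp only [comp_apply, LinearEquiv.coe_coe, map_tmul] at h3
      rw [h3]
    | add p q hp hq => simp only [map_add, hp, hq]
  rw [step1 (SB.Δ b), middle_swap SB, ← comp_apply (map (map z₁ z₂) (map z₁ z₂)),
    ← TensorProduct.map_comp]

lemma sigma_counit (hz₁ : DivBialgHom k SB S1 z₁) (hz₂ : DivBialgHom k SB S2 z₂) (b : B) :
    tcounit k S1 S2 (map z₁ z₂ (SB.Δ b)) = SB.ε b := by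
  have step1 : ∀ w : B ⊗[k] B, tcounit k S1 S2 (map z₁ z₂ w)
      = TensorProduct.lid k k (map SB.ε SB.ε w) := by
    intro w
    induction w using TensorProduct.induction_on with
    | zero => simp
    | tmul b₁ b₂ => rw [map_tmul, tcounit_tmul, hz₁.map_ε, hz₂.map_ε]; simp [smul_eq_mul]
    | add p q hp hq => simp only [map_add, hp, hq]
  rw [step1, eps_comul]

lemma sigma_pbFst (hz₁ : DivBialgHom k SB S1 z₁) (hz₂ : DivBialgHom k SB S2 z₂)
    (hsec₁ : π₁ ∘ₗ z₁ = LinearMap.id) (b : B) :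
    pbFst k S2 π₁ (map z₁ z₂ (SB.Δ b)) = b := by
  have step1 : ∀ w : B ⊗[k] B, pbFst k S2 π₁ (map z₁ z₂ w)
      = TensorProduct.rid k B (lTensor B SB.ε w) := by
    intro w
    induction w using TensorProduct.induction_on with
    | zero => simp
    | tmul b₁ b₂ => rw [map_tmul, pbFst_tmul, hz₂.map_ε, pi_z hsec₁]; simp
    | add p q hp hq => simp only [map_add, hp, hq]
  rw [step1]
  exact SB.counit_right b

lemma sigma_pbSnd (hz₁ : DivBialgHom k SB S1 z₁) (hz₂ : DivBialgHom k SB S2 z₂)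
    (hsec₂ : π₂ ∘ₗ z₂ = LinearMap.id) (b : B) :
    pbSnd k S1 π₂ (map z₁ z₂ (SB.Δ b)) = b := by
  have step1 : ∀ w : B ⊗[k] B, pbSnd k S1 π₂ (map z₁ z₂ w)
      = TensorProduct.lid k B (rTensor B SB.ε w) := by
    intro w
    induction w using TensorProduct.induction_on with
    | zero => simp
    | tmul b₁ b₂ => rw [map_tmul, pbSnd_tmul, hz₁.map_ε, pi_z hsec₂]; simp
    | add p q hp hq => simp only [map_add, hp, hq]
  rw [step1]
  exact SB.counit_left b

lemma sigma_mem (hz₁ : DivBialgHom k SB S1 z₁) (hz₂ : DivBialgHom k SB S2 z₂)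
    (hsec₁ : π₁ ∘ₗ z₁ = LinearMap.id) (hsec₂ : π₂ ∘ₗ z₂ = LinearMap.id) (b : B) :
    map z₁ z₂ (SB.Δ b) ∈ pullbackSub k S1 S2 π₁ π₂ := by
  set σ₀ : B →ₗ[k] A₁ ⊗[k] A₂ := map z₁ z₂ ∘ₗ SB.Δ with hσ₀
  have hset : range σ₀ ∈ {C : Submodule k (A₁ ⊗[k] A₂) |
      IsSubcoalg k (tcomul k S1 S2) C ∧
      ∀ t ∈ C, pbFst k S2 π₁ t = pbSnd k S1 π₂ t} := by
    constructor
    · rintro t ⟨b', rfl⟩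
      have h1 : tcomul k S1 S2 (σ₀ b') = map σ₀ σ₀ (SB.Δ b') := sigma_comul hz₁ hz₂ b'
      rw [h1]
      have hsr : (range σ₀).subtype ∘ₗ σ₀.rangeRestrict = σ₀ := LinearMap.ext fun _ => rfl
      have hcomp : map σ₀ σ₀
          = map (range σ₀).subtype (range σ₀).subtype
              ∘ₗ map σ₀.rangeRestrict σ₀.rangeRestrict := by
        rw [← TensorProduct.map_comp, hsr]
      rw [hcomp]
      exact ⟨map σ₀.rangeRestrict σ₀.rangeRestrict (SB.Δ b'), rfl⟩
    · rintro t ⟨b', rfl⟩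
      have := sigma_pbFst hz₁ hz₂ hsec₁ (π₁ := π₁) b'
      have := sigma_pbSnd hz₁ hz₂ hsec₂ (π₂ := π₂) b'
      show pbFst k S2 π₁ (σ₀ b') = pbSnd k S1 π₂ (σ₀ b')
      rw [show σ₀ b' = map z₁ z₂ (SB.Δ b') from rfl,
        sigma_pbFst hz₁ hz₂ hsec₁ b', sigma_pbSnd hz₁ hz₂ hsec₂ b']
  exact le_sSup hset ⟨b, rfl⟩

end Pullback

end FLAux
namespace FLAux
open TensorProduct LinearMap FormalLoops

variable {k : Type*} [Field k]

section Part2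
variable {A₁ A₂ B : Type*} [AddCommGroup A₁] [Module k A₁] [AddCommGroup A₂] [Module k A₂]
  [AddCommGroup B] [Module k B]
variable (S1 : DivBialg k A₁) (S2 : DivBialg k A₂)

/-- `u ⊗ v ↦ ε₂(v) u` -/
noncomputable def eproj1 : A₁ ⊗[k] A₂ →ₗ[k] A₁ :=
  (TensorProduct.rid k A₁).toLinearMap ∘ₗ lTensor A₁ S2.ε

/-- `u ⊗ v ↦ ε₁(u) v` -/
noncomputable def eproj2 : A₁ ⊗[k] A₂ →ₗ[k] A₂ :=
  (TensorProduct.lid k A₂).toLinearMap ∘ₗ rTensor A₂ S1.ε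

lemma eproj1_tmul (u : A₁) (v : A₂) : eproj1 S2 (u ⊗ₜ[k] v) = S2.ε v • u := by
  simp [eproj1]

lemma eproj2_tmul (u : A₁) (v : A₂) : eproj2 S1 (u ⊗ₜ[k] v) = S1.ε u • v := by
  simp [eproj2]

lemma E1 (x : A₁ ⊗[k] A₁) (y : A₂ ⊗[k] A₂) :
    map (eproj1 S2) (eproj1 S2) (tensorTensorTensorComm k A₁ A₁ A₂ A₂ (x ⊗ₜ[k] y))
      = (TensorProduct.lid k k (map S2.ε S2.ε y)) • x := by
  induction x using TensorProduct.induction_on with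
  | zero => simp [zero_tmul]
  | tmul a b =>
    induction y using TensorProduct.induction_on with
    | zero => simp [tmul_zero]
    | tmul c d =>
      simp only [tensorTensorTensorComm_tmul, map_tmul, eproj1_tmul, lid_tmul,
        smul_eq_mul]
      simp only [TensorProduct.tmul_smul, TensorProduct.smul_tmul', smul_smul, mul_comm]
    | add p q hp hq => simp only [tmul_add, map_add, hp, hq, add_smul, smul_add]
  | add p q hp hq => simp only [add_tmul, map_add, hp, hq, smul_add]

lemma E2 (x : A₁ ⊗[k] A₁) (y : A₂ ⊗[k] A₂) :
    map (eproj2 S1) (eproj2 S1) (tensorTensorTensorComm k A₁ A₁ A₂ A₂ (x ⊗ₜ[k] y))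
      = (TensorProduct.lid k k (map S1.ε S1.ε x)) • y := by
  induction x using TensorProduct.induction_on with
  | zero => simp [zero_tmul]
  | tmul a b =>
    induction y using TensorProduct.induction_on with
    | zero => simp [tmul_zero]
    | tmul c d =>
      simp only [tensorTensorTensorComm_tmul, map_tmul, eproj2_tmul, lid_tmul,
        smul_eq_mul]
      simp only [TensorProduct.tmul_smul, TensorProduct.smul_tmul', smul_smul, mul_comm]
    | add p q hp hq => simp only [tmul_add, map_add, hp, hq, smul_add]
  | add p q hp hq => simp only [add_tmul, map_add, hp, hq, add_smul, smul_add]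

lemma E3 (x : A₁ ⊗[k] A₁) (y : A₂ ⊗[k] A₂) :
    map (eproj1 S2) (eproj2 S1) (tensorTensorTensorComm k A₁ A₁ A₂ A₂ (x ⊗ₜ[k] y))
      = (TensorProduct.rid k A₁ (lTensor A₁ S1.ε x))
          ⊗ₜ[k] (TensorProduct.lid k A₂ (rTensor A₂ S2.ε y)) := by
  induction x using TensorProduct.induction_on with
  | zero => simp [zero_tmul]
  | tmul a b =>
    induction y using TensorProduct.induction_on with
    | zero => simp [tmul_zero]
    | tmul c d =>
      simp only [tensorTensorTensorComm_tmul, map_tmul, eproj1_tmul, eproj2_tmul,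
        lTensor_tmul, rTensor_tmul, rid_tmul, lid_tmul]
      simp only [TensorProduct.tmul_smul, TensorProduct.smul_tmul', smul_smul, mul_comm]
    | add p q hp hq => simp only [tmul_add, map_add, hp, hq]
  | add p q hp hq => simp only [add_tmul, map_add, hp, hq]

lemma MI1 (t : A₁ ⊗[k] A₂) :
    S1.Δ (eproj1 S2 t) = map (eproj1 S2) (eproj1 S2) (tcomul k S1 S2 t) := by
  induction t using TensorProduct.induction_on with
  | zero => simp
  | tmul u v =>
    rw [eproj1_tmul, map_smul, tcomul_tmul, E1, eps_comul]
  | add p q hp hq => simp only [map_add, hp, hq]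

lemma MI2 (t : A₁ ⊗[k] A₂) :
    S2.Δ (eproj2 S1 t) = map (eproj2 S1) (eproj2 S1) (tcomul k S1 S2 t) := by
  induction t using TensorProduct.induction_on with
  | zero => simp
  | tmul u v =>
    rw [eproj2_tmul, map_smul, tcomul_tmul, E2, eps_comul]
  | add p q hp hq => simp only [map_add, hp, hq]

lemma MI3 (t : A₁ ⊗[k] A₂) :
    map (eproj1 S2) (eproj2 S1) (tcomul k S1 S2 t) = t := by
  induction t using TensorProduct.induction_on with
  | zero => simp
  | tmul u v => rw [tcomul_tmul, E3, S1.counit_right, S2.counit_left]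
  | add p q hp hq => simp only [map_add, hp, hq]

lemma MI4 (π₁ : A₁ →ₗ[k] B) (t : A₁ ⊗[k] A₂) :
    π₁ (eproj1 S2 t) = pbFst k S2 π₁ t := by
  induction t using TensorProduct.induction_on with
  | zero => simp
  | tmul u v => rw [eproj1_tmul, map_smul, pbFst_tmul]
  | add p q hp hq => simp only [map_add, hp, hq]

lemma MI5 (t : A₁ ⊗[k] A₂) : S1.ε (eproj1 S2 t) = tcounit k S1 S2 t := by
  induction t using TensorProduct.induction_on with
  | zero => simp
  | tmul u v => rw [eproj1_tmul, map_smul, tcounit_tmul, smul_eq_mul, mul_comm]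
  | add p q hp hq => simp only [map_add, hp, hq]

lemma MI6 (π₂ : A₂ →ₗ[k] B) (t : A₁ ⊗[k] A₂) :
    π₂ (eproj2 S1 t) = pbSnd k S1 π₂ t := by
  induction t using TensorProduct.induction_on with
  | zero => simp
  | tmul u v => rw [eproj2_tmul, map_smul, pbSnd_tmul]
  | add p q hp hq => simp only [map_add, hp, hq]

lemma MI7 (t : A₁ ⊗[k] A₂) : S2.ε (eproj2 S1 t) = tcounit k S1 S2 t := by
  induction t using TensorProduct.induction_on with
  | zero => simp
  | tmul u v => rw [eproj2_tmul, map_smul, tcounit_tmul, smul_eq_mul]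
  | add p q hp hq => simp only [map_add, hp, hq]

/-- STATEMENT (2). -/
lemma part2 (SB : DivBialg k B) (π₁ : A₁ →ₗ[k] B) (π₂ : A₂ →ₗ[k] B) :
    sSup {D : Submodule k (A₁ ⊗[k] A₂) | IsSubcoalg k (tcomul k S1 S2) D ∧
        ∀ t ∈ D, pbFst k S2 π₁ t = tcounit k S1 S2 t • SB.one ∧
                 pbSnd k S1 π₂ t = tcounit k S1 S2 t • SB.one}
      = range (map (Fsub k S1 SB.one π₁).subtype (Fsub k S2 SB.one π₂).subtype) := by
  apply le_antisymm
  · apply sSup_le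
    rintro D ⟨hD1, hD2⟩ t ht
    have hE1 : Submodule.map (eproj1 S2) D ≤ Fsub k S1 SB.one π₁ := by
      apply le_sSup
      constructor
      · rintro x ⟨t', ht', rfl⟩
        rw [MI1]
        obtain ⟨s, hs⟩ := hD1 t' ht'
        rw [← hs]
        have hsub : (Submodule.map (eproj1 S2) D).subtype ∘ₗ
            (codRestrict (Submodule.map (eproj1 S2) D) (eproj1 S2 ∘ₗ D.subtype)
              (fun d => Submodule.mem_map_of_mem d.2))
            = eproj1 S2 ∘ₗ D.subtype := LinearMap.subtype_comp_codRestrict _ _ _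
        have hh : map (eproj1 S2) (eproj1 S2) (map D.subtype D.subtype s)
            = map (Submodule.map (eproj1 S2) D).subtype
                (Submodule.map (eproj1 S2) D).subtype
                (map (codRestrict (Submodule.map (eproj1 S2) D) (eproj1 S2 ∘ₗ D.subtype)
                  (fun d => Submodule.mem_map_of_mem d.2))
                  (codRestrict (Submodule.map (eproj1 S2) D) (eproj1 S2 ∘ₗ D.subtype)
                  (fun d => Submodule.mem_map_of_mem d.2)) s) := by
          rw [← comp_apply, ← TensorProduct.map_comp, ← comp_apply,
            ← TensorProduct.map_comp, hsub]
        rw [hh]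
        exact ⟨_, rfl⟩
      · rintro x ⟨t', ht', rfl⟩
        rw [MI4, (hD2 t' ht').1, MI5]
    have hE2 : Submodule.map (eproj2 S1) D ≤ Fsub k S2 SB.one π₂ := by
      apply le_sSup
      constructor
      · rintro x ⟨t', ht', rfl⟩
        rw [MI2]
        obtain ⟨s, hs⟩ := hD1 t' ht'
        rw [← hs]
        have hsub : (Submodule.map (eproj2 S1) D).subtype ∘ₗ
            (codRestrict (Submodule.map (eproj2 S1) D) (eproj2 S1 ∘ₗ D.subtype)
              (fun d => Submodule.mem_map_of_mem d.2))
            = eproj2 S1 ∘ₗ D.subtype := LinearMap.subtype_comp_codRestrict _ _ _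
        have hh : map (eproj2 S1) (eproj2 S1) (map D.subtype D.subtype s)
            = map (Submodule.map (eproj2 S1) D).subtype
                (Submodule.map (eproj2 S1) D).subtype
                (map (codRestrict (Submodule.map (eproj2 S1) D) (eproj2 S1 ∘ₗ D.subtype)
                  (fun d => Submodule.mem_map_of_mem d.2))
                  (codRestrict (Submodule.map (eproj2 S1) D) (eproj2 S1 ∘ₗ D.subtype)
                  (fun d => Submodule.mem_map_of_mem d.2)) s) := by
          rw [← comp_apply, ← TensorProduct.map_comp, ← comp_apply,
            ← TensorProduct.map_comp, hsub]
        rw [hh]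
        exact ⟨_, rfl⟩
      · rintro x ⟨t', ht', rfl⟩
        rw [MI6, (hD2 t' ht').2, MI7]
    obtain ⟨s, hs⟩ := hD1 t ht
    have f1mem : ∀ d : D, eproj1 S2 (D.subtype d) ∈ Fsub k S1 SB.one π₁ :=
      fun d => hE1 (Submodule.mem_map_of_mem d.2)
    have f2mem : ∀ d : D, eproj2 S1 (D.subtype d) ∈ Fsub k S2 SB.one π₂ :=
      fun d => hE2 (Submodule.mem_map_of_mem d.2)
    have hco : map (eproj1 S2) (eproj2 S1) (map D.subtype D.subtype s)
        = map (Fsub k S1 SB.one π₁).subtype (Fsub k S2 SB.one π₂).subtype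
            (map (codRestrict (Fsub k S1 SB.one π₁) (eproj1 S2 ∘ₗ D.subtype) f1mem)
              (codRestrict (Fsub k S2 SB.one π₂) (eproj2 S1 ∘ₗ D.subtype) f2mem) s) := by
      rw [← comp_apply, ← TensorProduct.map_comp, ← comp_apply, ← TensorProduct.map_comp,
        LinearMap.subtype_comp_codRestrict, LinearMap.subtype_comp_codRestrict]
    refine ⟨map (codRestrict (Fsub k S1 SB.one π₁) (eproj1 S2 ∘ₗ D.subtype) f1mem)
      (codRestrict (Fsub k S2 SB.one π₂) (eproj2 S1 ∘ₗ D.subtype) f2mem) s, ?_⟩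
    rw [← hco, hs, MI3]
  · apply le_sSup
    constructor
    · rintro t ⟨s, rfl⟩
      induction s using TensorProduct.induction_on with
      | zero => simp
      | tmul x y =>
        rw [map_tmul, tcomul_tmul]
        simp only [Submodule.coe_subtype]
        rw [← subComul_spec (Fsub_subcoalg S1 SB.one π₁) x,
          ← subComul_spec (Fsub_subcoalg S2 SB.one π₂) y]
        have h3 := LinearMap.congr_fun
          (ttc_natural (Fsub k S1 SB.one π₁).subtype (Fsub k S1 SB.one π₁).subtype
            (Fsub k S2 SB.one π₂).subtype (Fsub k S2 SB.one π₂).subtype)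
          ((subComul S1.Δ _ x) ⊗ₜ[k] (subComul S2.Δ _ y))
        simp only [comp_apply, LinearEquiv.coe_coe, map_tmul] at h3
        rw [h3]
        have hsr : (range (map (Fsub k S1 SB.one π₁).subtype
              (Fsub k S2 SB.one π₂).subtype)).subtype
            ∘ₗ (map (Fsub k S1 SB.one π₁).subtype
              (Fsub k S2 SB.one π₂).subtype).rangeRestrict
            = map (Fsub k S1 SB.one π₁).subtype (Fsub k S2 SB.one π₂).subtype :=
          LinearMap.ext fun _ => rfl
        have hh : map (map (Fsub k S1 SB.one π₁).subtype (Fsub k S2 SB.one π₂).subtype)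
              (map (Fsub k S1 SB.one π₁).subtype (Fsub k S2 SB.one π₂).subtype)
            = map (range (map (Fsub k S1 SB.one π₁).subtype
                  (Fsub k S2 SB.one π₂).subtype)).subtype
                (range (map (Fsub k S1 SB.one π₁).subtype
                  (Fsub k S2 SB.one π₂).subtype)).subtype
                ∘ₗ map (map (Fsub k S1 SB.one π₁).subtype
                    (Fsub k S2 SB.one π₂).subtype).rangeRestrict
                  (map (Fsub k S1 SB.one π₁).subtype
                    (Fsub k S2 SB.one π₂).subtype).rangeRestrict := by
          rw [← TensorProduct.map_comp, hsr]
        rw [hh]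
        exact ⟨_, rfl⟩
      | add p q hp hq =>
        rw [map_add, map_add]
        exact add_mem hp hq
    · rintro t ⟨s, rfl⟩
      have h : ∀ s', pbFst k S2 π₁
            (map (Fsub k S1 SB.one π₁).subtype (Fsub k S2 SB.one π₂).subtype s')
          = tcounit k S1 S2
              (map (Fsub k S1 SB.one π₁).subtype (Fsub k S2 SB.one π₂).subtype s')
            • SB.one
          ∧ pbSnd k S1 π₂
            (map (Fsub k S1 SB.one π₁).subtype (Fsub k S2 SB.one π₂).subtype s')
          = tcounit k S1 S2
              (map (Fsub k S1 SB.one π₁).subtype (Fsub k S2 SB.one π₂).subtype s')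
            • SB.one := by
        intro s'
        induction s' using TensorProduct.induction_on with
        | zero => simp
        | tmul x y =>
          constructor
          · rw [map_tmul]
            simp only [Submodule.coe_subtype]
            rw [pbFst_tmul, tcounit_tmul, Fsub_pi S1 SB.one π₁ _ x.2, smul_smul, mul_comm]
          · rw [map_tmul]
            simp only [Submodule.coe_subtype]
            rw [pbSnd_tmul, tcounit_tmul, Fsub_pi S2 SB.one π₂ _ y.2, smul_smul]
        | add p q hp hq =>
          constructor
          · rw [map_add, map_add, map_add, hp.1, hq.1, add_smul]
          · rw [map_add, map_add, map_add, hp.2, hq.2, add_smul]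
      exact h s

end Part2

end FLAux
namespace FLAux
open TensorProduct LinearMap FormalLoops

variable {k : Type*} [Field k]

section Part3
variable {A₁ A₂ B : Type*} [AddCommGroup A₁] [Module k A₁] [AddCommGroup A₂] [Module k A₂]
  [AddCommGroup B] [Module k B]
variable (S1 : DivBialg k A₁) (S2 : DivBialg k A₂) (SB : DivBialg k B)
variable (π₁ : A₁ →ₗ[k] B) (π₂ : A₂ →ₗ[k] B) (z₁ : B →ₗ[k] A₁) (z₂ : B →ₗ[k] A₂)

/-- `x ⊗ b ↦ x · z₁(b)` -/
noncomputable def mh1 : (Fsub k S1 SB.one π₁) ⊗[k] B →ₗ[k] A₁ :=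
  lift S1.mul ∘ₗ map (Fsub k S1 SB.one π₁).subtype z₁

noncomputable def mh2 : (Fsub k S2 SB.one π₂) ⊗[k] B →ₗ[k] A₂ :=
  lift S2.mul ∘ₗ map (Fsub k S2 SB.one π₂).subtype z₂

/-- the normal form map used to compare the two sides of the comultiplication identity -/
noncomputable def NN :
    (((Fsub k S1 SB.one π₁) ⊗[k] (Fsub k S1 SB.one π₁)) ⊗[k] (B ⊗[k] B))
      ⊗[k] (((Fsub k S2 SB.one π₂) ⊗[k] (Fsub k S2 SB.one π₂)) ⊗[k] (B ⊗[k] B))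
      →ₗ[k] (A₁ ⊗[k] A₂) ⊗[k] (A₁ ⊗[k] A₂) :=
  (tensorTensorTensorComm k A₁ A₁ A₂ A₂).toLinearMap ∘ₗ
    map (map (mh1 S1 SB π₁ z₁) (mh1 S1 SB π₁ z₁) ∘ₗ
          (tensorTensorTensorComm k (Fsub k S1 SB.one π₁) (Fsub k S1 SB.one π₁) B B).toLinearMap)
        (map (mh2 S2 SB π₂ z₂) (mh2 S2 SB π₂ z₂) ∘ₗ
          (tensorTensorTensorComm k (Fsub k S2 SB.one π₂) (Fsub k S2 SB.one π₂) B B).toLinearMap)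

variable {S1 S2 SB π₁ π₂ z₁ z₂}

lemma mh1_tmul (x : Fsub k S1 SB.one π₁) (b : B) :
    mh1 S1 SB π₁ z₁ (x ⊗ₜ[k] b) = S1.mul (x : A₁) (z₁ b) := by
  simp [mh1]

lemma mh2_tmul (y : Fsub k S2 SB.one π₂) (b : B) :
    mh2 S2 SB π₂ z₂ (y ⊗ₜ[k] b) = S2.mul (y : A₂) (z₂ b) := by
  simp [mh2]

lemma comul_mh1 (hz₁ : DivBialgHom k SB S1 z₁) (x : Fsub k S1 SB.one π₁) (b : B) :
    S1.Δ (mh1 S1 SB π₁ z₁ (x ⊗ₜ[k] b))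
      = map (mh1 S1 SB π₁ z₁) (mh1 S1 SB π₁ z₁)
          (tensorTensorTensorComm k (Fsub k S1 SB.one π₁) (Fsub k S1 SB.one π₁) B B
            (subComul S1.Δ (Fsub k S1 SB.one π₁) x ⊗ₜ[k] SB.Δ b)) := by
  rw [mh1_tmul, comul_mul_section hz₁ x b]
  rfl

lemma comul_mh2 (hz₂ : DivBialgHom k SB S2 z₂) (y : Fsub k S2 SB.one π₂) (b : B) :
    S2.Δ (mh2 S2 SB π₂ z₂ (y ⊗ₜ[k] b))
      = map (mh2 S2 SB π₂ z₂) (mh2 S2 SB π₂ z₂)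
          (tensorTensorTensorComm k (Fsub k S2 SB.one π₂) (Fsub k S2 SB.one π₂) B B
            (subComul S2.Δ (Fsub k S2 SB.one π₂) y ⊗ₜ[k] SB.Δ b)) := by
  rw [mh2_tmul, comul_mul_section hz₂ y b]
  rfl

lemma GL1 (hz₁ : DivBialgHom k SB S1 z₁) (hz₂ : DivBialgHom k SB S2 z₂)
    (x : Fsub k S1 SB.one π₁) (y : Fsub k S2 SB.one π₂) (c : B ⊗[k] B) :
    tcomul k S1 S2 (map (mh1 S1 SB π₁ z₁) (mh2 S2 SB π₂ z₂)
        (tensorTensorTensorComm k (Fsub k S1 SB.one π₁) (Fsub k S2 SB.one π₂) B B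
          ((x ⊗ₜ[k] y) ⊗ₜ[k] c)))
      = NN S1 S2 SB π₁ π₂ z₁ z₂
          (tensorTensorTensorComm k _ _ (B ⊗[k] B) (B ⊗[k] B)
            ((subComul S1.Δ (Fsub k S1 SB.one π₁) x
                ⊗ₜ[k] subComul S2.Δ (Fsub k S2 SB.one π₂) y)
              ⊗ₜ[k] map SB.Δ SB.Δ c)) := by
  induction c using TensorProduct.induction_on with
  | zero => simp
  | tmul b₁ b₂ =>
    rw [tensorTensorTensorComm_tmul, map_tmul, tcomul_tmul, comul_mh1 hz₁, comul_mh2 hz₂,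
      map_tmul, tensorTensorTensorComm_tmul]
    simp only [NN, comp_apply, LinearEquiv.coe_coe, map_tmul]
  | add p q hp hq => simp only [map_add, tmul_add, hp, hq]

lemma GL3 (x₁ x₂ : Fsub k S1 SB.one π₁) (y₁ y₂ : Fsub k S2 SB.one π₂)
    (d₁ d₂ : B ⊗[k] B) :
    (map (mh1 S1 SB π₁ z₁) (mh2 S2 SB π₂ z₂)
        (tensorTensorTensorComm k (Fsub k S1 SB.one π₁) (Fsub k S2 SB.one π₂) B B
          ((x₁ ⊗ₜ[k] y₁) ⊗ₜ[k] d₁)))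
      ⊗ₜ[k] (map (mh1 S1 SB π₁ z₁) (mh2 S2 SB π₂ z₂)
        (tensorTensorTensorComm k (Fsub k S1 SB.one π₁) (Fsub k S2 SB.one π₂) B B
          ((x₂ ⊗ₜ[k] y₂) ⊗ₜ[k] d₂)))
      = NN S1 S2 SB π₁ π₂ z₁ z₂
          (tensorTensorTensorComm k _ _ (B ⊗[k] B) (B ⊗[k] B)
            (((x₁ ⊗ₜ[k] x₂) ⊗ₜ[k] (y₁ ⊗ₜ[k] y₂))
              ⊗ₜ[k] (tensorTensorTensorComm k B B B B (d₁ ⊗ₜ[k] d₂)))) := by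
  induction d₁ using TensorProduct.induction_on with
  | zero => simp
  | tmul p q =>
    induction d₂ using TensorProduct.induction_on with
    | zero => simp
    | tmul r s =>
      simp only [tensorTensorTensorComm_tmul, map_tmul, NN, comp_apply,
        LinearEquiv.coe_coe]
    | add p' q' hp' hq' => simp only [map_add, tmul_add, hp', hq']
  | add p' q' hp' hq' => simp only [map_add, tmul_add, add_tmul, hp', hq']

lemma theta_tmul
    {Θ : ((Fsub k S1 SB.one π₁) ⊗[k] (Fsub k S2 SB.one π₂)) ⊗[k] B →ₗ[k] A₁ ⊗[k] A₂}
    (hΘ : Θ = map (mh1 S1 SB π₁ z₁) (mh2 S2 SB π₂ z₂) ∘ₗ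
      (tensorTensorTensorComm k (Fsub k S1 SB.one π₁) (Fsub k S2 SB.one π₂) B B).toLinearMap
      ∘ₗ lTensor ((Fsub k S1 SB.one π₁) ⊗[k] (Fsub k S2 SB.one π₂)) SB.Δ)
    (T : (Fsub k S1 SB.one π₁) ⊗[k] (Fsub k S2 SB.one π₂)) (b : B) :
    Θ (T ⊗ₜ[k] b) = map (mh1 S1 SB π₁ z₁) (mh2 S2 SB π₂ z₂)
      (tensorTensorTensorComm k (Fsub k S1 SB.one π₁) (Fsub k S2 SB.one π₂) B B
        (T ⊗ₜ[k] SB.Δ b)) := by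
  rw [hΘ]
  simp

lemma GL2
    {Θ : ((Fsub k S1 SB.one π₁) ⊗[k] (Fsub k S2 SB.one π₂)) ⊗[k] B →ₗ[k] A₁ ⊗[k] A₂}
    (hΘ : Θ = map (mh1 S1 SB π₁ z₁) (mh2 S2 SB π₂ z₂) ∘ₗ
      (tensorTensorTensorComm k (Fsub k S1 SB.one π₁) (Fsub k S2 SB.one π₂) B B).toLinearMap
      ∘ₗ lTensor ((Fsub k S1 SB.one π₁) ⊗[k] (Fsub k S2 SB.one π₂)) SB.Δ)
    (s₁ : (Fsub k S1 SB.one π₁) ⊗[k] (Fsub k S1 SB.one π₁))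
    (s₂ : (Fsub k S2 SB.one π₂) ⊗[k] (Fsub k S2 SB.one π₂)) (c : B ⊗[k] B) :
    map Θ Θ (tensorTensorTensorComm k
        ((Fsub k S1 SB.one π₁) ⊗[k] (Fsub k S2 SB.one π₂))
        ((Fsub k S1 SB.one π₁) ⊗[k] (Fsub k S2 SB.one π₂)) B B
        ((tensorTensorTensorComm k (Fsub k S1 SB.one π₁) (Fsub k S1 SB.one π₁)
            (Fsub k S2 SB.one π₂) (Fsub k S2 SB.one π₂) (s₁ ⊗ₜ[k] s₂)) ⊗ₜ[k] c))
      = NN S1 S2 SB π₁ π₂ z₁ z₂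
          (tensorTensorTensorComm k _ _ (B ⊗[k] B) (B ⊗[k] B)
            ((s₁ ⊗ₜ[k] s₂) ⊗ₜ[k] (tensorTensorTensorComm k B B B B
              (map SB.Δ SB.Δ c)))) := by
  induction s₁ using TensorProduct.induction_on with
  | zero => simp
  | tmul x₁ x₂ =>
    induction s₂ using TensorProduct.induction_on with
    | zero => simp
    | tmul y₁ y₂ =>
      induction c using TensorProduct.induction_on with
      | zero => simp
      | tmul b₁ b₂ =>
        rw [tensorTensorTensorComm_tmul, tensorTensorTensorComm_tmul, map_tmul,
          theta_tmul hΘ, theta_tmul hΘ, map_tmul, GL3]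
      | add p q hp hq => simp only [map_add, tmul_add, hp, hq]
    | add p q hp hq => simp only [map_add, tmul_add, add_tmul, hp, hq]
  | add p q hp hq => simp only [map_add, tmul_add, add_tmul, hp, hq]

/-- the comultiplication formula for `Θ` (statement (3), coalgebra-morphism part). -/
lemma PC (hz₁ : DivBialgHom k SB S1 z₁) (hz₂ : DivBialgHom k SB S2 z₂)
    {Θ : ((Fsub k S1 SB.one π₁) ⊗[k] (Fsub k S2 SB.one π₂)) ⊗[k] B →ₗ[k] A₁ ⊗[k] A₂}
    (hΘ : Θ = map (mh1 S1 SB π₁ z₁) (mh2 S2 SB π₂ z₂) ∘ₗ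
      (tensorTensorTensorComm k (Fsub k S1 SB.one π₁) (Fsub k S2 SB.one π₂) B B).toLinearMap
      ∘ₗ lTensor ((Fsub k S1 SB.one π₁) ⊗[k] (Fsub k S2 SB.one π₂)) SB.Δ)
    (x : Fsub k S1 SB.one π₁) (y : Fsub k S2 SB.one π₂) (b : B) :
    tcomul k S1 S2 (Θ ((x ⊗ₜ[k] y) ⊗ₜ[k] b))
      = map Θ Θ (tensorTensorTensorComm k
          ((Fsub k S1 SB.one π₁) ⊗[k] (Fsub k S2 SB.one π₂))
          ((Fsub k S1 SB.one π₁) ⊗[k] (Fsub k S2 SB.one π₂)) B B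
          ((tensorTensorTensorComm k (Fsub k S1 SB.one π₁) (Fsub k S1 SB.one π₁)
              (Fsub k S2 SB.one π₂) (Fsub k S2 SB.one π₂)
              (subComul S1.Δ (Fsub k S1 SB.one π₁) x
                ⊗ₜ[k] subComul S2.Δ (Fsub k S2 SB.one π₂) y))
            ⊗ₜ[k] SB.Δ b)) := by
  rw [theta_tmul hΘ, GL1 hz₁ hz₂, GL2 hΘ, middle_swap SB]

end Part3

end FLAux
namespace FLAux
open TensorProduct LinearMap FormalLoops

variable {k : Type*} [Field k]

section Part3b
variable {A₁ A₂ B : Type*} [AddCommGroup A₁] [Module k A₁] [AddCommGroup A₂] [Module k A₂]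
  [AddCommGroup B] [Module k B]
variable (S1 : DivBialg k A₁) (S2 : DivBialg k A₂) (SB : DivBialg k B)
variable (π₁ : A₁ →ₗ[k] B) (π₂ : A₂ →ₗ[k] B) (z₁ : B →ₗ[k] A₁) (z₂ : B →ₗ[k] A₂)

/-- counit of `F₁ ⊗ F₂` -/
noncomputable def epsF : (Fsub k S1 SB.one π₁) ⊗[k] (Fsub k S2 SB.one π₂) →ₗ[k] k :=
  (TensorProduct.lid k k).toLinearMap ∘ₗ
    map (S1.ε ∘ₗ (Fsub k S1 SB.one π₁).subtype) (S2.ε ∘ₗ (Fsub k S2 SB.one π₂).subtype)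

variable {S1 S2 SB π₁ π₂ z₁ z₂}

lemma epsF_tmul (x : Fsub k S1 SB.one π₁) (y : Fsub k S2 SB.one π₂) :
    epsF S1 S2 SB π₁ π₂ (x ⊗ₜ[k] y) = S1.ε (x : A₁) * S2.ε (y : A₂) := by
  simp [epsF, smul_eq_mul]

lemma eps_mh1 (hz₁ : DivBialgHom k SB S1 z₁) (x : Fsub k S1 SB.one π₁) (b : B) :
    S1.ε (mh1 S1 SB π₁ z₁ (x ⊗ₜ[k] b)) = S1.ε (x : A₁) * SB.ε b := by
  rw [mh1_tmul, eps_mul_section hz₁]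

lemma eps_mh2 (hz₂ : DivBialgHom k SB S2 z₂) (y : Fsub k S2 SB.one π₂) (b : B) :
    S2.ε (mh2 S2 SB π₂ z₂ (y ⊗ₜ[k] b)) = S2.ε (y : A₂) * SB.ε b := by
  rw [mh2_tmul, eps_mul_section hz₂]

lemma pi_mh1 (hπ₁ : DivBialgHom k S1 SB π₁) (hsec₁ : π₁ ∘ₗ z₁ = LinearMap.id)
    (x : Fsub k S1 SB.one π₁) (b : B) :
    π₁ (mh1 S1 SB π₁ z₁ (x ⊗ₜ[k] b)) = S1.ε (x : A₁) • b := by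
  rw [mh1_tmul]
  exact pi_mul_section hπ₁ hsec₁ x b

lemma pi_mh2 (hπ₂ : DivBialgHom k S2 SB π₂) (hsec₂ : π₂ ∘ₗ z₂ = LinearMap.id)
    (y : Fsub k S2 SB.one π₂) (b : B) :
    π₂ (mh2 S2 SB π₂ z₂ (y ⊗ₜ[k] b)) = S2.ε (y : A₂) • b := by
  rw [mh2_tmul]
  exact pi_mul_section hπ₂ hsec₂ y b

/-- counit formula for `Θ`. -/
lemma CT (hz₁ : DivBialgHom k SB S1 z₁) (hz₂ : DivBialgHom k SB S2 z₂)
    {Θ : ((Fsub k S1 SB.one π₁) ⊗[k] (Fsub k S2 SB.one π₂)) ⊗[k] B →ₗ[k] A₁ ⊗[k] A₂}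
    (hΘ : Θ = map (mh1 S1 SB π₁ z₁) (mh2 S2 SB π₂ z₂) ∘ₗ
      (tensorTensorTensorComm k (Fsub k S1 SB.one π₁) (Fsub k S2 SB.one π₂) B B).toLinearMap
      ∘ₗ lTensor ((Fsub k S1 SB.one π₁) ⊗[k] (Fsub k S2 SB.one π₂)) SB.Δ)
    (x : Fsub k S1 SB.one π₁) (y : Fsub k S2 SB.one π₂) (b : B) :
    tcounit k S1 S2 (Θ ((x ⊗ₜ[k] y) ⊗ₜ[k] b))
      = (S1.ε (x : A₁) * S2.ε (y : A₂)) * SB.ε b := by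
  rw [theta_tmul hΘ]
  have step : ∀ c : B ⊗[k] B,
      tcounit k S1 S2 (map (mh1 S1 SB π₁ z₁) (mh2 S2 SB π₂ z₂)
        (tensorTensorTensorComm k (Fsub k S1 SB.one π₁) (Fsub k S2 SB.one π₂) B B
          ((x ⊗ₜ[k] y) ⊗ₜ[k] c)))
      = (S1.ε (x : A₁) * S2.ε (y : A₂)) * TensorProduct.lid k k (map SB.ε SB.ε c) := by
    intro c
    induction c using TensorProduct.induction_on with
    | zero => simp
    | tmul b₁ b₂ =>
      rw [tensorTensorTensorComm_tmul, map_tmul, tcounit_tmul, eps_mh1 hz₁, eps_mh2 hz₂]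
      simp only [map_tmul, lid_tmul, smul_eq_mul]
      ring
    | add p q hp hq => simp only [map_add, tmul_add, hp, hq, mul_add]
  rw [step, eps_comul]

/-- `pbFst ∘ Θ`. -/
lemma MUmap (hπ₁ : DivBialgHom k S1 SB π₁) (hz₂ : DivBialgHom k SB S2 z₂)
    (hsec₁ : π₁ ∘ₗ z₁ = LinearMap.id)
    {Θ : ((Fsub k S1 SB.one π₁) ⊗[k] (Fsub k S2 SB.one π₂)) ⊗[k] B →ₗ[k] A₁ ⊗[k] A₂}
    (hΘ : Θ = map (mh1 S1 SB π₁ z₁) (mh2 S2 SB π₂ z₂) ∘ₗ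
      (tensorTensorTensorComm k (Fsub k S1 SB.one π₁) (Fsub k S2 SB.one π₂) B B).toLinearMap
      ∘ₗ lTensor ((Fsub k S1 SB.one π₁) ⊗[k] (Fsub k S2 SB.one π₂)) SB.Δ) :
    pbFst k S2 π₁ ∘ₗ Θ = (TensorProduct.lid k B).toLinearMap ∘ₗ
      map (epsF S1 S2 SB π₁ π₂) (LinearMap.id : B →ₗ[k] B) := by
  apply ext_threefold
  intro x y b
  simp only [comp_apply, LinearEquiv.coe_coe, map_tmul, lid_tmul, epsF_tmul, id_coe, id_eq]
  rw [theta_tmul hΘ]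
  have step : ∀ c : B ⊗[k] B,
      pbFst k S2 π₁ (map (mh1 S1 SB π₁ z₁) (mh2 S2 SB π₂ z₂)
        (tensorTensorTensorComm k (Fsub k S1 SB.one π₁) (Fsub k S2 SB.one π₂) B B
          ((x ⊗ₜ[k] y) ⊗ₜ[k] c)))
      = (S1.ε (x : A₁) * S2.ε (y : A₂)) • TensorProduct.rid k B (lTensor B SB.ε c) := by
    intro c
    induction c using TensorProduct.induction_on with
    | zero => simp
    | tmul b₁ b₂ =>
      rw [tensorTensorTensorComm_tmul, map_tmul, pbFst_tmul, eps_mh2 hz₂,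
        pi_mh1 hπ₁ hsec₁]
      simp only [lTensor_tmul, rid_tmul, smul_smul]
      congr 1
      ring
    | add p q hp hq => simp only [map_add, tmul_add, hp, hq, smul_add]
  rw [step, SB.counit_right]

/-- `pbSnd ∘ Θ`. -/
lemma MU2map (hπ₂ : DivBialgHom k S2 SB π₂) (hz₁ : DivBialgHom k SB S1 z₁)
    (hsec₂ : π₂ ∘ₗ z₂ = LinearMap.id)
    {Θ : ((Fsub k S1 SB.one π₁) ⊗[k] (Fsub k S2 SB.one π₂)) ⊗[k] B →ₗ[k] A₁ ⊗[k] A₂}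
    (hΘ : Θ = map (mh1 S1 SB π₁ z₁) (mh2 S2 SB π₂ z₂) ∘ₗ
      (tensorTensorTensorComm k (Fsub k S1 SB.one π₁) (Fsub k S2 SB.one π₂) B B).toLinearMap
      ∘ₗ lTensor ((Fsub k S1 SB.one π₁) ⊗[k] (Fsub k S2 SB.one π₂)) SB.Δ) :
    pbSnd k S1 π₂ ∘ₗ Θ = (TensorProduct.lid k B).toLinearMap ∘ₗ
      map (epsF S1 S2 SB π₁ π₂) (LinearMap.id : B →ₗ[k] B) := by
  apply ext_threefold
  intro x y b
  simp only [comp_apply, LinearEquiv.coe_coe, map_tmul, lid_tmul, epsF_tmul, id_coe, id_eq]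
  rw [theta_tmul hΘ]
  have step : ∀ c : B ⊗[k] B,
      pbSnd k S1 π₂ (map (mh1 S1 SB π₁ z₁) (mh2 S2 SB π₂ z₂)
        (tensorTensorTensorComm k (Fsub k S1 SB.one π₁) (Fsub k S2 SB.one π₂) B B
          ((x ⊗ₜ[k] y) ⊗ₜ[k] c)))
      = (S1.ε (x : A₁) * S2.ε (y : A₂)) • TensorProduct.lid k B (rTensor B SB.ε c) := by
    intro c
    induction c using TensorProduct.induction_on with
    | zero => simp
    | tmul b₁ b₂ =>
      rw [tensorTensorTensorComm_tmul, map_tmul, pbSnd_tmul, eps_mh1 hz₁,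
        pi_mh2 hπ₂ hsec₂]
      simp only [rTensor_tmul, lid_tmul, smul_smul]
      congr 1
      ring
    | add p q hp hq => simp only [map_add, tmul_add, hp, hq, smul_add]
  rw [step, SB.counit_left]

/-- corestriction of `rmap` to `F`. -/
noncomputable def rr1 (hπ₁ : DivBialgHom k S1 SB π₁) (hz₁ : DivBialgHom k SB S1 z₁)
    (hsec₁ : π₁ ∘ₗ z₁ = LinearMap.id) : A₁ →ₗ[k] Fsub k S1 SB.one π₁ :=
  codRestrict (Fsub k S1 SB.one π₁) (rmap S1 π₁ z₁) (fun u => rmap_mem hπ₁ hz₁ hsec₁ u)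

noncomputable def rr2 (hπ₂ : DivBialgHom k S2 SB π₂) (hz₂ : DivBialgHom k SB S2 z₂)
    (hsec₂ : π₂ ∘ₗ z₂ = LinearMap.id) : A₂ →ₗ[k] Fsub k S2 SB.one π₂ :=
  codRestrict (Fsub k S2 SB.one π₂) (rmap S2 π₂ z₂) (fun u => rmap_mem hπ₂ hz₂ hsec₂ u)

lemma rr1_mh1 (hπ₁ : DivBialgHom k S1 SB π₁) (hz₁ : DivBialgHom k SB S1 z₁)
    (hsec₁ : π₁ ∘ₗ z₁ = LinearMap.id) (x : Fsub k S1 SB.one π₁) (b : B) :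
    rr1 hπ₁ hz₁ hsec₁ (mh1 S1 SB π₁ z₁ (x ⊗ₜ[k] b)) = SB.ε b • x := by
  apply Subtype.ext
  rw [rr1, codRestrict_apply, mh1_tmul, rmap_mul_section hπ₁ hz₁ hsec₁]
  simp

lemma rr2_mh2 (hπ₂ : DivBialgHom k S2 SB π₂) (hz₂ : DivBialgHom k SB S2 z₂)
    (hsec₂ : π₂ ∘ₗ z₂ = LinearMap.id) (y : Fsub k S2 SB.one π₂) (b : B) :
    rr2 hπ₂ hz₂ hsec₂ (mh2 S2 SB π₂ z₂ (y ⊗ₜ[k] b)) = SB.ε b • y := by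
  apply Subtype.ext
  rw [rr2, codRestrict_apply, mh2_tmul, rmap_mul_section hπ₂ hz₂ hsec₂]
  simp

/-- `(r₁' ⊗ r₂') ∘ Θ`. -/
lemma NUmap (hπ₁ : DivBialgHom k S1 SB π₁) (hz₁ : DivBialgHom k SB S1 z₁)
    (hsec₁ : π₁ ∘ₗ z₁ = LinearMap.id)
    (hπ₂ : DivBialgHom k S2 SB π₂) (hz₂ : DivBialgHom k SB S2 z₂)
    (hsec₂ : π₂ ∘ₗ z₂ = LinearMap.id)
    {Θ : ((Fsub k S1 SB.one π₁) ⊗[k] (Fsub k S2 SB.one π₂)) ⊗[k] B →ₗ[k] A₁ ⊗[k] A₂}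
    (hΘ : Θ = map (mh1 S1 SB π₁ z₁) (mh2 S2 SB π₂ z₂) ∘ₗ
      (tensorTensorTensorComm k (Fsub k S1 SB.one π₁) (Fsub k S2 SB.one π₂) B B).toLinearMap
      ∘ₗ lTensor ((Fsub k S1 SB.one π₁) ⊗[k] (Fsub k S2 SB.one π₂)) SB.Δ) :
    map (rr1 hπ₁ hz₁ hsec₁) (rr2 hπ₂ hz₂ hsec₂) ∘ₗ Θ
      = (TensorProduct.rid k ((Fsub k S1 SB.one π₁) ⊗[k] (Fsub k S2 SB.one π₂))).toLinearMap
          ∘ₗ lTensor ((Fsub k S1 SB.one π₁) ⊗[k] (Fsub k S2 SB.one π₂)) SB.ε := by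
  apply ext_threefold
  intro x y b
  simp only [comp_apply, LinearEquiv.coe_coe, lTensor_tmul, rid_tmul]
  rw [theta_tmul hΘ]
  have step : ∀ c : B ⊗[k] B,
      map (rr1 hπ₁ hz₁ hsec₁) (rr2 hπ₂ hz₂ hsec₂)
        (map (mh1 S1 SB π₁ z₁) (mh2 S2 SB π₂ z₂)
          (tensorTensorTensorComm k (Fsub k S1 SB.one π₁) (Fsub k S2 SB.one π₂) B B
            ((x ⊗ₜ[k] y) ⊗ₜ[k] c)))
      = TensorProduct.lid k k (map SB.ε SB.ε c) • (x ⊗ₜ[k] y) := by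
    intro c
    induction c using TensorProduct.induction_on with
    | zero => simp
    | tmul b₁ b₂ =>
      rw [tensorTensorTensorComm_tmul, map_tmul, map_tmul,
        rr1_mh1 hπ₁ hz₁ hsec₁, rr2_mh2 hπ₂ hz₂ hsec₂]
      simp only [map_tmul, lid_tmul, smul_eq_mul, TensorProduct.tmul_smul,
        TensorProduct.smul_tmul', smul_smul, mul_comm]
    | add p q hp hq => simp only [map_add, tmul_add, hp, hq, add_smul]
  rw [step, eps_comul]

end Part3b

end FLAux
namespace FLAux
open TensorProduct LinearMap FormalLoops

variable {k : Type*} [Field k]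

section Part3c
variable {A₁ A₂ B : Type*} [AddCommGroup A₁] [Module k A₁] [AddCommGroup A₂] [Module k A₂]
  [AddCommGroup B] [Module k B]
variable {S1 : DivBialg k A₁} {S2 : DivBialg k A₂} {SB : DivBialg k B}
variable {π₁ : A₁ →ₗ[k] B} {π₂ : A₂ →ₗ[k] B} {z₁ : B →ₗ[k] A₁} {z₂ : B →ₗ[k] A₂}

lemma GPsi (s : ((Fsub k S1 SB.one π₁) ⊗[k] (Fsub k S2 SB.one π₂))
      ⊗[k] ((Fsub k S1 SB.one π₁) ⊗[k] (Fsub k S2 SB.one π₂))) (c : B ⊗[k] B) :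
    map ((TensorProduct.rid k ((Fsub k S1 SB.one π₁) ⊗[k] (Fsub k S2 SB.one π₂))).toLinearMap
          ∘ₗ lTensor ((Fsub k S1 SB.one π₁) ⊗[k] (Fsub k S2 SB.one π₂)) SB.ε)
        ((TensorProduct.lid k B).toLinearMap ∘ₗ
          map (epsF S1 S2 SB π₁ π₂) (LinearMap.id : B →ₗ[k] B))
        (tensorTensorTensorComm k
          ((Fsub k S1 SB.one π₁) ⊗[k] (Fsub k S2 SB.one π₂))
          ((Fsub k S1 SB.one π₁) ⊗[k] (Fsub k S2 SB.one π₂)) B B (s ⊗ₜ[k] c))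
      = (TensorProduct.rid k ((Fsub k S1 SB.one π₁) ⊗[k] (Fsub k S2 SB.one π₂)))
          (lTensor _ (epsF S1 S2 SB π₁ π₂) s)
        ⊗ₜ[k] (TensorProduct.lid k B) (rTensor B SB.ε c) := by
  induction s using TensorProduct.induction_on with
  | zero => simp [zero_tmul]
  | tmul T₁ T₂ =>
    induction c using TensorProduct.induction_on with
    | zero => simp [tmul_zero]
    | tmul b₁ b₂ =>
      simp only [tensorTensorTensorComm_tmul, map_tmul, comp_apply, LinearEquiv.coe_coe,
        lTensor_tmul, rTensor_tmul, rid_tmul, lid_tmul, id_coe, id_eq,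
        TensorProduct.tmul_smul, TensorProduct.smul_tmul', smul_smul, mul_comm]
    | add p q hp hq => simp only [map_add, tmul_add, hp, hq]
  | add p q hp hq => simp only [map_add, tmul_add, add_tmul, hp, hq]

lemma GK (s₁ : (Fsub k S1 SB.one π₁) ⊗[k] (Fsub k S1 SB.one π₁))
    (s₂ : (Fsub k S2 SB.one π₂) ⊗[k] (Fsub k S2 SB.one π₂)) :
    (TensorProduct.rid k ((Fsub k S1 SB.one π₁) ⊗[k] (Fsub k S2 SB.one π₂)))
        (lTensor _ (epsF S1 S2 SB π₁ π₂)
          (tensorTensorTensorComm k (Fsub k S1 SB.one π₁) (Fsub k S1 SB.one π₁)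
            (Fsub k S2 SB.one π₂) (Fsub k S2 SB.one π₂) (s₁ ⊗ₜ[k] s₂)))
      = ((TensorProduct.rid k (Fsub k S1 SB.one π₁))
            (lTensor _ (S1.ε ∘ₗ (Fsub k S1 SB.one π₁).subtype) s₁))
          ⊗ₜ[k] ((TensorProduct.rid k (Fsub k S2 SB.one π₂))
            (lTensor _ (S2.ε ∘ₗ (Fsub k S2 SB.one π₂).subtype) s₂)) := by
  induction s₁ using TensorProduct.induction_on with
  | zero => simp [zero_tmul]
  | tmul x₁ x₂ =>
    induction s₂ using TensorProduct.induction_on with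
    | zero => simp [tmul_zero]
    | tmul y₁ y₂ =>
      simp only [tensorTensorTensorComm_tmul, lTensor_tmul, rid_tmul, epsF_tmul,
        comp_apply, Submodule.coe_subtype, TensorProduct.tmul_smul,
        TensorProduct.smul_tmul', smul_smul, mul_comm]
    | add p q hp hq => simp only [map_add, tmul_add, hp, hq]
  | add p q hp hq => simp only [map_add, tmul_add, add_tmul, hp, hq]

/-- `Ψ ∘ Θ = id`. -/
lemma PsiTheta (hπ₁ : DivBialgHom k S1 SB π₁) (hz₁ : DivBialgHom k SB S1 z₁)
    (hsec₁ : π₁ ∘ₗ z₁ = LinearMap.id)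
    (hπ₂ : DivBialgHom k S2 SB π₂) (hz₂ : DivBialgHom k SB S2 z₂)
    (hsec₂ : π₂ ∘ₗ z₂ = LinearMap.id)
    {Θ : ((Fsub k S1 SB.one π₁) ⊗[k] (Fsub k S2 SB.one π₂)) ⊗[k] B →ₗ[k] A₁ ⊗[k] A₂}
    (hΘ : Θ = map (mh1 S1 SB π₁ z₁) (mh2 S2 SB π₂ z₂) ∘ₗ
      (tensorTensorTensorComm k (Fsub k S1 SB.one π₁) (Fsub k S2 SB.one π₂) B B).toLinearMap
      ∘ₗ lTensor ((Fsub k S1 SB.one π₁) ⊗[k] (Fsub k S2 SB.one π₂)) SB.Δ) :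
    (map (map (rr1 hπ₁ hz₁ hsec₁) (rr2 hπ₂ hz₂ hsec₂)) (pbFst k S2 π₁)
      ∘ₗ tcomul k S1 S2) ∘ₗ Θ = LinearMap.id := by
  apply ext_threefold
  intro x y b
  simp only [comp_apply, id_coe, id_eq]
  rw [PC hz₁ hz₂ hΘ, ← comp_apply (map (map _ _) (pbFst k S2 π₁)) (map Θ Θ),
    ← TensorProduct.map_comp, NUmap hπ₁ hz₁ hsec₁ hπ₂ hz₂ hsec₂ hΘ,
    MUmap hπ₁ hz₂ hsec₁ hΘ, GPsi, GK,
    subComul_counit S1 (Fsub_subcoalg S1 SB.one π₁) x,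
    subComul_counit S2 (Fsub_subcoalg S2 SB.one π₂) y, SB.counit_left]

lemma DB (hπ₁ : DivBialgHom k S1 SB π₁) :
    SB.Δ ∘ₗ pbFst k S2 π₁
      = map (pbFst k S2 π₁) (pbFst k S2 π₁) ∘ₗ tcomul k S1 S2 := by
  apply TensorProduct.ext'
  intro u v
  have gen : ∀ (x : A₁ ⊗[k] A₁) (y : A₂ ⊗[k] A₂),
      map (pbFst k S2 π₁) (pbFst k S2 π₁)
        (tensorTensorTensorComm k A₁ A₁ A₂ A₂ (x ⊗ₜ[k] y))
      = TensorProduct.lid k k (map S2.ε S2.ε y) • map π₁ π₁ x := by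
    intro x y
    induction x using TensorProduct.induction_on with
    | zero => simp [zero_tmul]
    | tmul a b =>
      induction y using TensorProduct.induction_on with
      | zero => simp [tmul_zero]
      | tmul c d =>
        simp only [tensorTensorTensorComm_tmul, map_tmul, pbFst_tmul, lid_tmul,
          smul_eq_mul, TensorProduct.tmul_smul, TensorProduct.smul_tmul', smul_smul,
          mul_comm]
      | add p q hp hq => simp only [map_add, tmul_add, hp, hq, add_smul, smul_add]
    | add p q hp hq => simp only [map_add, add_tmul, hp, hq, smul_add]
  simp only [comp_apply]
  rw [pbFst_tmul, map_smul, tcomul_tmul, gen, eps_comul, ← hπ₁.map_Δ]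

lemma PB3 (hπ₁ : DivBialgHom k S1 SB π₁) (hπ₂ : DivBialgHom k S2 SB π₂) :
    map (pbFst k S2 π₁) (pbSnd k S1 π₂) ∘ₗ tcomul k S1 S2 = map π₁ π₂ := by
  apply TensorProduct.ext'
  intro u v
  have gen : ∀ (x : A₁ ⊗[k] A₁) (y : A₂ ⊗[k] A₂),
      map (pbFst k S2 π₁) (pbSnd k S1 π₂)
        (tensorTensorTensorComm k A₁ A₁ A₂ A₂ (x ⊗ₜ[k] y))
      = (TensorProduct.rid k B (map π₁ S1.ε x)) ⊗ₜ[k] (TensorProduct.lid k B (map S2.ε π₂ y)) := by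
    intro x y
    induction x using TensorProduct.induction_on with
    | zero => simp [zero_tmul]
    | tmul a b =>
      induction y using TensorProduct.induction_on with
      | zero => simp [tmul_zero]
      | tmul c d =>
        simp only [tensorTensorTensorComm_tmul, map_tmul, pbFst_tmul, pbSnd_tmul,
          rid_tmul, lid_tmul, TensorProduct.tmul_smul, TensorProduct.smul_tmul',
          smul_smul, mul_comm]
      | add p q hp hq => simp only [map_add, tmul_add, hp, hq]
    | add p q hp hq => simp only [map_add, add_tmul, hp, hq]
  have h1 : ∀ w : A₁ ⊗[k] A₁, TensorProduct.rid k B (map π₁ S1.ε w)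
      = π₁ (TensorProduct.rid k A₁ (lTensor A₁ S1.ε w)) := by
    intro w
    induction w using TensorProduct.induction_on with
    | zero => simp
    | tmul a b => simp
    | add p q hp hq => simp only [map_add, hp, hq]
  have h2 : ∀ w : A₂ ⊗[k] A₂, TensorProduct.lid k B (map S2.ε π₂ w)
      = π₂ (TensorProduct.lid k A₂ (rTensor A₂ S2.ε w)) := by
    intro w
    induction w using TensorProduct.induction_on with
    | zero => simp
    | tmul a b => simp
    | add p q hp hq => simp only [map_add, hp, hq]
  simp only [comp_apply]
  rw [tcomul_tmul, gen, h1, h2, S1.counit_right, S2.counit_left, map_tmul]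

lemma TT :
    (tensorTensorTensorComm k A₁ A₂ A₁ A₂).toLinearMap ∘ₗ tcomul k S1 S2
      = map S1.Δ S2.Δ := by
  apply TensorProduct.ext'
  intro u v
  have gen : ∀ (x : A₁ ⊗[k] A₁) (y : A₂ ⊗[k] A₂),
      tensorTensorTensorComm k A₁ A₂ A₁ A₂
        (tensorTensorTensorComm k A₁ A₁ A₂ A₂ (x ⊗ₜ[k] y)) = x ⊗ₜ[k] y := by
    intro x y
    induction x using TensorProduct.induction_on with
    | zero => simp [zero_tmul]
    | tmul a b =>
      induction y using TensorProduct.induction_on with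
      | zero => simp [tmul_zero]
      | tmul c d => simp
      | add p q hp hq => simp only [map_add, tmul_add, hp, hq]
    | add p q hp hq => simp only [map_add, add_tmul, hp, hq]
  simp only [comp_apply, LinearEquiv.coe_coe]
  rw [tcomul_tmul, gen, map_tmul]

/-- the reconstruction `Φ = id`. -/
lemma PhiId (hπ₁ : DivBialgHom k S1 SB π₁) (hz₁ : DivBialgHom k SB S1 z₁)
    (hsec₁ : π₁ ∘ₗ z₁ = LinearMap.id)
    (hπ₂ : DivBialgHom k S2 SB π₂) (hz₂ : DivBialgHom k SB S2 z₂)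
    (hsec₂ : π₂ ∘ₗ z₂ = LinearMap.id) (t : A₁ ⊗[k] A₂) :
    map (mh1 S1 SB π₁ z₁) (mh2 S2 SB π₂ z₂)
      (tensorTensorTensorComm k (Fsub k S1 SB.one π₁) (Fsub k S2 SB.one π₂) B B
        (map (map (rr1 hπ₁ hz₁ hsec₁) (rr2 hπ₂ hz₂ hsec₂)) (map π₁ π₂)
          (tcomul k S1 S2 t))) = t := by
  have h1 := LinearMap.congr_fun
    (ttc_natural (rr1 hπ₁ hz₁ hsec₁) (rr2 hπ₂ hz₂ hsec₂) π₁ π₂) (tcomul k S1 S2 t)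
  simp only [comp_apply, LinearEquiv.coe_coe] at h1
  rw [h1]
  have h2 := LinearMap.congr_fun (TT (S1 := S1) (S2 := S2)) t
  simp only [comp_apply, LinearEquiv.coe_coe] at h2
  rw [h2]
  have gen : ∀ w : A₁ ⊗[k] A₂,
      map (mh1 S1 SB π₁ z₁) (mh2 S2 SB π₂ z₂)
        (map (map (rr1 hπ₁ hz₁ hsec₁) π₁) (map (rr2 hπ₂ hz₂ hsec₂) π₂)
          (map S1.Δ S2.Δ w)) = w := by
    intro w
    induction w using TensorProduct.induction_on with
    | zero => simp
    | tmul u v =>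
      simp only [map_tmul]
      have e1 : ∀ s : A₁ ⊗[k] A₁, mh1 S1 SB π₁ z₁ (map (rr1 hπ₁ hz₁ hsec₁) π₁ s)
          = lift S1.mul (map (rmap S1 π₁ z₁) (z₁ ∘ₗ π₁) s) := by
        intro s
        induction s using TensorProduct.induction_on with
        | zero => simp
        | tmul a b => simp [mh1, rr1]
        | add p q hp hq => simp only [map_add, hp, hq]
      have e2 : ∀ s : A₂ ⊗[k] A₂, mh2 S2 SB π₂ z₂ (map (rr2 hπ₂ hz₂ hsec₂) π₂ s)
          = lift S2.mul (map (rmap S2 π₂ z₂) (z₂ ∘ₗ π₂) s) := by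
        intro s
        induction s using TensorProduct.induction_on with
        | zero => simp
        | tmul a b => simp [mh2, rr2]
        | add p q hp hq => simp only [map_add, hp, hq]
      rw [e1, e2, rmap_recon hπ₁ hz₁, rmap_recon hπ₂ hz₂]
    | add p q hp hq => simp only [map_add, hp, hq]
  exact gen t

/-- map-level comultiplication identity for `Θ`. -/
lemma PCmap (hz₁ : DivBialgHom k SB S1 z₁) (hz₂ : DivBialgHom k SB S2 z₂)
    {Θ : ((Fsub k S1 SB.one π₁) ⊗[k] (Fsub k S2 SB.one π₂)) ⊗[k] B →ₗ[k] A₁ ⊗[k] A₂}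
    (hΘ : Θ = map (mh1 S1 SB π₁ z₁) (mh2 S2 SB π₂ z₂) ∘ₗ
      (tensorTensorTensorComm k (Fsub k S1 SB.one π₁) (Fsub k S2 SB.one π₂) B B).toLinearMap
      ∘ₗ lTensor ((Fsub k S1 SB.one π₁) ⊗[k] (Fsub k S2 SB.one π₂)) SB.Δ) :
    tcomul k S1 S2 ∘ₗ Θ
      = map Θ Θ ∘ₗ (tensorTensorTensorComm k
            ((Fsub k S1 SB.one π₁) ⊗[k] (Fsub k S2 SB.one π₂))
            ((Fsub k S1 SB.one π₁) ⊗[k] (Fsub k S2 SB.one π₂)) B B).toLinearMap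
        ∘ₗ map ((tensorTensorTensorComm k (Fsub k S1 SB.one π₁) (Fsub k S1 SB.one π₁)
              (Fsub k S2 SB.one π₂) (Fsub k S2 SB.one π₂)).toLinearMap
            ∘ₗ map (subComul S1.Δ (Fsub k S1 SB.one π₁)) (subComul S2.Δ (Fsub k S2 SB.one π₂)))
          SB.Δ := by
  apply ext_threefold
  intro x y b
  simp only [comp_apply, LinearEquiv.coe_coe, map_tmul]
  exact PC hz₁ hz₂ hΘ x y b

end Part3c

end FLAux
open FLAux LinearMap

open FormalLoops in
/-- properties of the pullback `A₁ ⊗_B A₂`. -/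
theorem pullback_section_and_factorization
    (k : Type*) [Field k] [CharZero k]
    {A₁ A₂ B : Type*} [AddCommGroup A₁] [Module k A₁] [AddCommGroup A₂] [Module k A₂]
    [AddCommGroup B] [Module k B]
    (S1 : DivBialg k A₁) (S2 : DivBialg k A₂) (SB : DivBialg k B)
    (π₁ : A₁ →ₗ[k] B) (π₂ : A₂ →ₗ[k] B) (z₁ : B →ₗ[k] A₁) (z₂ : B →ₗ[k] A₂)
    (hπ₁ : DivBialgHom k S1 SB π₁) (hπ₂ : DivBialgHom k S2 SB π₂)
    (hz₁ : DivBialgHom k SB S1 z₁) (hz₂ : DivBialgHom k SB S2 z₂)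
    (hsec₁ : π₁ ∘ₗ z₁ = LinearMap.id) (hsec₂ : π₂ ∘ₗ z₂ = LinearMap.id)
    -- abbreviations
    (F₁ : Submodule k A₁) (hF₁ : F₁ = Fsub k S1 SB.one π₁)
    (F₂ : Submodule k A₂) (hF₂ : F₂ = Fsub k S2 SB.one π₂)
    (pb : Submodule k (A₁ ⊗[k] A₂)) (hpb : pb = pullbackSub k S1 S2 π₁ π₂)
    -- the section σ : B → A₁ ⊗ A₂, b ↦ Σ z₁(b₍₁₎) ⊗ z₂(b₍₂₎)
    (σ : B →ₗ[k] A₁ ⊗[k] A₂) (hσ : σ = TensorProduct.map z₁ z₂ ∘ₗ SB.Δ)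
    -- the map Θ : (F₁ ⊗ F₂) ⊗ B → A₁ ⊗ A₂, (x ⊗ y) ⊗ b ↦ Σ x·z₁(b₍₁₎) ⊗ y·z₂(b₍₂₎)
    (Θ : (F₁ ⊗[k] F₂) ⊗[k] B →ₗ[k] A₁ ⊗[k] A₂)
    (hΘ : Θ = TensorProduct.map
            (TensorProduct.lift S1.mul ∘ₗ TensorProduct.map F₁.subtype z₁)
            (TensorProduct.lift S2.mul ∘ₗ TensorProduct.map F₂.subtype z₂) ∘ₗ
          (TensorProduct.tensorTensorTensorComm k F₁ F₂ B B).toLinearMap ∘ₗ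
          LinearMap.lTensor (F₁ ⊗[k] F₂) SB.Δ) :
    -- (1) σ is a coalgebra morphism into A₁ ⊗_B A₂ which is a section of π
    ((∀ b : B, σ b ∈ pb) ∧
     (∀ b : B, tcomul k S1 S2 (σ b) = TensorProduct.map σ σ (SB.Δ b)) ∧
     (∀ b : B, tcounit k S1 S2 (σ b) = SB.ε b) ∧
     (∀ b : B, pbFst k S2 π₁ (σ b) = b)) ∧
    -- (2) F(A₁ ⊗_B A₂) = F(A₁) ⊗ F(A₂) as subspaces of A₁ ⊗ A₂
    (sSup {D : Submodule k (A₁ ⊗[k] A₂) | IsSubcoalg k (tcomul k S1 S2) D ∧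
        ∀ t ∈ D, pbFst k S2 π₁ t = tcounit k S1 S2 t • SB.one ∧
                 pbSnd k S1 π₂ t = tcounit k S1 S2 t • SB.one}
      = LinearMap.range (TensorProduct.map F₁.subtype F₂.subtype)) ∧
    -- (3) Θ is a bijective coalgebra morphism onto A₁ ⊗_B A₂
    (Function.Injective Θ ∧ LinearMap.range Θ = pb ∧
     ∃ (ΔF₁ : F₁ →ₗ[k] F₁ ⊗[k] F₁) (ΔF₂ : F₂ →ₗ[k] F₂ ⊗[k] F₂),
       (∀ x : F₁, TensorProduct.map F₁.subtype F₁.subtype (ΔF₁ x) = S1.Δ (x : A₁)) ∧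
       (∀ y : F₂, TensorProduct.map F₂.subtype F₂.subtype (ΔF₂ y) = S2.Δ (y : A₂)) ∧
       (∀ (x : F₁) (y : F₂) (b : B),
          tcomul k S1 S2 (Θ ((x ⊗ₜ[k] y) ⊗ₜ[k] b))
            = TensorProduct.map Θ Θ
                ((TensorProduct.tensorTensorTensorComm k
                    (F₁ ⊗[k] F₂) (F₁ ⊗[k] F₂) B B)
                  (((TensorProduct.tensorTensorTensorComm k F₁ F₁ F₂ F₂)
                      (ΔF₁ x ⊗ₜ[k] ΔF₂ y)) ⊗ₜ[k] SB.Δ b))) ∧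
       (∀ (x : F₁) (y : F₂) (b : B),
          tcounit k S1 S2 (Θ ((x ⊗ₜ[k] y) ⊗ₜ[k] b))
            = (S1.ε (x : A₁) * S2.ε (y : A₂)) * SB.ε b)) := by
  subst hF₁ hF₂ hpb
  have hΘ' : Θ = TensorProduct.map (mh1 S1 SB π₁ z₁) (mh2 S2 SB π₂ z₂) ∘ₗ
      (TensorProduct.tensorTensorTensorComm k (Fsub k S1 SB.one π₁)
        (Fsub k S2 SB.one π₂) B B).toLinearMap ∘ₗ
      LinearMap.lTensor ((Fsub k S1 SB.one π₁) ⊗[k] (Fsub k S2 SB.one π₂)) SB.Δ := hΘ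
  refine ⟨⟨?_, ?_, ?_, ?_⟩, ?_, ?_, ?_, ?_⟩
  · -- (1a) σ b ∈ pb
    intro b
    rw [hσ]
    simp only [comp_apply]
    exact sigma_mem hz₁ hz₂ hsec₁ hsec₂ b
  · -- (1b) comultiplicativity of σ
    intro b
    rw [hσ]
    simp only [comp_apply]
    exact sigma_comul hz₁ hz₂ b
  · -- (1c) counit
    intro b
    rw [hσ]
    simp only [comp_apply]
    exact sigma_counit hz₁ hz₂ b
  · -- (1d) section
    intro b
    rw [hσ]
    simp only [comp_apply]
    exact sigma_pbFst hz₁ hz₂ hsec₁ b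
  · -- (2)
    exact part2 S1 S2 SB π₁ π₂
  · -- (3a) injectivity
    have hid := PsiTheta hπ₁ hz₁ hsec₁ hπ₂ hz₂ hsec₂ hΘ'
    intro a b hab
    have ha := LinearMap.congr_fun hid a
    have hb := LinearMap.congr_fun hid b
    simp only [comp_apply, id_coe, id_eq] at ha hb
    rw [← ha, ← hb, hab]
  · -- (3b) range Θ = pb
    apply le_antisymm
    · apply le_sSup
      constructor
      · rintro t ⟨s, rfl⟩
        have h := LinearMap.congr_fun (PCmap hz₁ hz₂ hΘ') s
        simp only [comp_apply] at h
        rw [h]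
        have hsr : (range Θ).subtype ∘ₗ Θ.rangeRestrict = Θ := LinearMap.ext fun _ => rfl
        have hcomp : TensorProduct.map Θ Θ
            = TensorProduct.map (range Θ).subtype (range Θ).subtype
                ∘ₗ TensorProduct.map Θ.rangeRestrict Θ.rangeRestrict := by
          rw [← TensorProduct.map_comp, hsr]
        rw [hcomp]
        exact ⟨_, rfl⟩
      · rintro t ⟨s, rfl⟩
        have h1 := LinearMap.congr_fun (MUmap hπ₁ hz₂ hsec₁ hΘ') s
        have h2 := LinearMap.congr_fun (MU2map hπ₂ hz₁ hsec₂ hΘ') s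
        simp only [comp_apply] at h1 h2
        rw [h1, h2]
    · -- pb ≤ range Θ
      have key : ∀ D ∈ {C : Submodule k (A₁ ⊗[k] A₂) |
            IsSubcoalg k (tcomul k S1 S2) C ∧
            ∀ t ∈ C, pbFst k S2 π₁ t = pbSnd k S1 π₂ t},
          ∀ t ∈ D, Θ (TensorProduct.map
              (TensorProduct.map (rr1 hπ₁ hz₁ hsec₁) (rr2 hπ₂ hz₂ hsec₂))
              (pbFst k S2 π₁) (tcomul k S1 S2 t)) = t := by
        rintro D ⟨hD1, hD2⟩ t ht
        obtain ⟨s, hs⟩ := hD1 t ht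
        have hfs : pbFst k S2 π₁ ∘ₗ D.subtype = pbSnd k S1 π₂ ∘ₗ D.subtype :=
          LinearMap.ext fun d => hD2 (↑d) d.2
        have hswap : (SB.Δ ∘ₗ pbFst k S2 π₁) ∘ₗ D.subtype
            = TensorProduct.map π₁ π₂ ∘ₗ D.subtype := by
          apply LinearMap.ext
          intro d
          simp only [comp_apply]
          have e1 := LinearMap.congr_fun (DB (S2 := S2) hπ₁) (D.subtype d)
          simp only [comp_apply] at e1
          rw [e1]
          obtain ⟨s', hs'⟩ := hD1 (↑d) d.2
          have e2 : TensorProduct.map (pbFst k S2 π₁) (pbFst k S2 π₁)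
                (TensorProduct.map D.subtype D.subtype s')
              = TensorProduct.map (pbFst k S2 π₁) (pbSnd k S1 π₂)
                (TensorProduct.map D.subtype D.subtype s') := by
            rw [← comp_apply, ← TensorProduct.map_comp,
              ← comp_apply (TensorProduct.map _ _), ← TensorProduct.map_comp, hfs]
          have e3 := LinearMap.congr_fun (PB3 hπ₁ hπ₂) (D.subtype d)
          simp only [comp_apply] at e3
          rw [show tcomul k S1 S2 (D.subtype d)
              = TensorProduct.map D.subtype D.subtype s' from hs'.symm] at e3 ⊢
          rw [e2, e3]
        -- main computation
        rw [hΘ']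
        simp only [comp_apply, LinearEquiv.coe_coe]
        have LT : ∀ w : (A₁ ⊗[k] A₂) ⊗[k] (A₁ ⊗[k] A₂),
            LinearMap.lTensor _ SB.Δ (TensorProduct.map
                (TensorProduct.map (rr1 hπ₁ hz₁ hsec₁) (rr2 hπ₂ hz₂ hsec₂))
                (pbFst k S2 π₁) w)
            = TensorProduct.map
                (TensorProduct.map (rr1 hπ₁ hz₁ hsec₁) (rr2 hπ₂ hz₂ hsec₂))
                (SB.Δ ∘ₗ pbFst k S2 π₁) w := by
          intro w
          induction w using TensorProduct.induction_on with
          | zero => simp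
          | tmul p q => simp
          | add p q hp hq => simp only [map_add, hp, hq]
        rw [LT, ← hs, ← comp_apply (TensorProduct.map _ _) (TensorProduct.map _ _),
          ← TensorProduct.map_comp, hswap, TensorProduct.map_comp, comp_apply, hs]
        exact PhiId hπ₁ hz₁ hsec₁ hπ₂ hz₂ hsec₂ t
      have hle : pullbackSub k S1 S2 π₁ π₂ ≤ LinearMap.eqLocus
          (Θ ∘ₗ (TensorProduct.map
              (TensorProduct.map (rr1 hπ₁ hz₁ hsec₁) (rr2 hπ₂ hz₂ hsec₂))
              (pbFst k S2 π₁) ∘ₗ tcomul k S1 S2)) LinearMap.id := by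
        apply sSup_le
        intro D hD t ht
        rw [LinearMap.mem_eqLocus]
        simp only [comp_apply, id_coe, id_eq]
        exact key D hD t ht
      intro t ht
      have h := hle ht
      rw [LinearMap.mem_eqLocus] at h
      simp only [comp_apply, id_coe, id_eq] at h
      exact ⟨_, h⟩
  · -- (3c) the comultiplications
    refine ⟨subComul S1.Δ (Fsub k S1 SB.one π₁), subComul S2.Δ (Fsub k S2 SB.one π₂),
      ?_, ?_, ?_, ?_⟩
    · exact fun x => subComul_spec (Fsub_subcoalg S1 SB.one π₁) x
    · exact fun y => subComul_spec (Fsub_subcoalg S2 SB.one π₂) y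
    · intro x y b
      exact PC hz₁ hz₂ hΘ' x y b
    · intro x y b
      exact CT hz₁ hz₂ hΘ' x y b
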